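/- arXiv:1207.2411 — 9 statements merged into one kernel-verified Lean document; each statement's English description precedes it below -/
import Mathlib

section
/- Let V be a real Hilbert space, let A, A' : V → V be bounded linear operators, let m > 0, and assume A is coercive in the sense that ⟨A x, x⟩ ≥ m ‖x‖² for all x ∈ V. Let f ∈ V and suppose P, P' ∈ V satisfy A P = f and A' P' = f. Then ‖P − P'‖ ≤ m^{-1} ‖A − A'‖_{op} ‖P'‖, where ‖·‖_{op} is the operator norm. -/
open scoped RealInnerProductSpace

/-- perturbation bound for coercive operator equations in a real
Hilbert space: if `A P = f`, `A' P' = f` and `⟨Ax, x⟩ ≥ m ‖x‖²`, then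
`‖P - P'‖ ≤ m⁻¹ ‖A - A'‖ ‖P'‖`. -/
theorem stmt4
    {V : Type*} [NormedAddCommGroup V] [InnerProductSpace ℝ V]
    [CompleteSpace V]
    (A A' : V →L[ℝ] V) (m : ℝ) (hm : 0 < m)
    (hcoer : ∀ x : V, m * ‖x‖ ^ 2 ≤ ⟪A x, x⟫)
    (f P P' : V) (hP : A P = f) (hP' : A' P' = f) :
    ‖P - P'‖ ≤ m⁻¹ * ‖A - A'‖ * ‖P'‖ := by
  set e := P - P' with he
  have key : m * ‖e‖ ^ 2 ≤ ‖A - A'‖ * ‖P'‖ * ‖e‖ := by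
    have h1 : A e = (A' - A) P' := by
      simp only [he, map_sub, ContinuousLinearMap.sub_apply, hP, hP']
    calc m * ‖e‖ ^ 2 ≤ ⟪A e, e⟫ := hcoer e
      _ = ⟪(A' - A) P', e⟫ := by rw [h1]
      _ ≤ ‖(A' - A) P'‖ * ‖e‖ := real_inner_le_norm _ _
      _ ≤ ‖A' - A‖ * ‖P'‖ * ‖e‖ := by
          gcongr
          exact (A' - A).le_opNorm P'
      _ = ‖A - A'‖ * ‖P'‖ * ‖e‖ := by rw [norm_sub_rev]
  rcases eq_or_ne e 0 with h | h
  · simp [h]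
    positivity
  · have hne : 0 < ‖e‖ := norm_pos_iff.mpr h
    have : m * ‖e‖ ≤ ‖A - A'‖ * ‖P'‖ := by
      have := key
      rw [sq] at this
      nlinarith
    rw [mul_assoc]
    exact (le_inv_mul_iff₀ hm).mpr this
end

section
/- Fix r > 0 and assume: (i) there exist Φ⋆(r) ≥ 0 and a measurable set U(r) ⊆ U with ρ(U(r)) > 0 such that Φ(u;δ) ≤ Φ⋆(r) for all u ∈ U(r) and all δ with |δ| ≤ r; (ii) there exists G_r ∈ L²(U,ρ) with G_r ≥ 0 such that |Φ(u;δ) − Φ(u;δ')| ≤ G_r(u)|δ − δ'| for all u ∈ U and all δ, δ' with |δ|, |δ'| ≤ r. For δ ∈ ℝ^k let ρ^δ be the probability measure on (U,Θ) with density exp(−Φ(u;δ))/Z(δ) with respect to ρ, where Z(δ) = ∫_U exp(−Φ(u;δ)) dρ(u). Then there exists a constant C(r) > 0 such that for all δ, δ' with |δ| ≤ r and |δ'| ≤ r, d_Hell(ρ^δ, ρ^{δ'}) ≤ C(r) |δ − δ'|. -/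
open MeasureTheory

/-- The Hellinger distance between two probability measures which are
absolutely continuous with respect to `ρ`, expressed through their densities
`f` and `h` with respect to `ρ`:
`d_Hell = ((1/2) ∫ (√f - √h)² dρ)^{1/2}`. -/
noncomputable def dHell {U : Type*} [MeasurableSpace U] (ρ : Measure U)
    (f h : U → ℝ) : ℝ :=
  Real.sqrt ((1 / 2) * ∫ u, (Real.sqrt (f u) - Real.sqrt (h u)) ^ 2 ∂ρ)

private lemma exp_neg_sub_le {x y : ℝ} (hx : 0 ≤ x) (hxy : x ≤ y) :
    Real.exp (-x) - Real.exp (-y) ≤ y - x := by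
  have h1 : Real.exp (-x) ≤ 1 := Real.exp_le_one_iff.2 (by linarith)
  have h2 := Real.add_one_le_exp (x - y)
  have h3 : Real.exp (-x) * Real.exp (x - y) = Real.exp (-y) := by
    rw [← Real.exp_add]; congr 1; ring
  nlinarith [Real.exp_pos (-x), Real.exp_pos (x - y)]

private lemma exp_neg_lip {x y : ℝ} (hx : 0 ≤ x) (hy : 0 ≤ y) :
    |Real.exp (-x) - Real.exp (-y)| ≤ |x - y| := by
  rcases le_total x y with h | h
  · have hd : Real.exp (-y) ≤ Real.exp (-x) := Real.exp_le_exp.2 (by linarith)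
    rw [abs_of_nonneg (by linarith), abs_of_nonpos (by linarith)]
    have := exp_neg_sub_le hx h
    linarith
  · have hd : Real.exp (-x) ≤ Real.exp (-y) := Real.exp_le_exp.2 (by linarith)
    rw [abs_of_nonpos (by linarith), abs_of_nonneg (by linarith)]
    have := exp_neg_sub_le hy h
    linarith

private lemma sqrt_exp' (x : ℝ) : Real.sqrt (Real.exp x) = Real.exp (x / 2) := by
  have h : Real.exp (x / 2) ^ 2 = Real.exp x := by
    rw [sq, ← Real.exp_add]; congr 1; ring
  rw [← h, Real.sqrt_sq (Real.exp_pos _).le]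

set_option maxHeartbeats 1600000 in
/-- local Lipschitz well-posedness of the Bayesian posterior
`dρ^δ/dρ = exp(-Φ(·;δ))/Z(δ)` in the Hellinger distance, under local
boundedness of `Φ` and local Lipschitz continuity in `δ` with an `L²`
Lipschitz-constant function `G_r`. -/
theorem stmt7
    {U : Type*} [MeasurableSpace U]
    (ρ : Measure U) [IsProbabilityMeasure ρ]
    (k : ℕ)
    (Φ : U → EuclideanSpace ℝ (Fin k) → ℝ)
    (hΦmeas : ∀ δ, Measurable fun u => Φ u δ)
    (hΦnonneg : ∀ u δ, 0 ≤ Φ u δ)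
    (r : ℝ) (hr : 0 < r)
    (Φstar : ℝ) (hΦstar : 0 ≤ Φstar)
    (Ur : Set U) (hUrmeas : MeasurableSet Ur) (hUrpos : 0 < ρ Ur)
    (hbound : ∀ u ∈ Ur, ∀ δ : EuclideanSpace ℝ (Fin k), ‖δ‖ ≤ r → Φ u δ ≤ Φstar)
    (G : U → ℝ) (hG : MemLp G 2 ρ) (hGnonneg : ∀ u, 0 ≤ G u)
    (hLip : ∀ u, ∀ δ δ' : EuclideanSpace ℝ (Fin k), ‖δ‖ ≤ r → ‖δ'‖ ≤ r →
      |Φ u δ - Φ u δ'| ≤ G u * ‖δ - δ'‖) :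
    ∃ C > (0 : ℝ), ∀ δ δ' : EuclideanSpace ℝ (Fin k), ‖δ‖ ≤ r → ‖δ'‖ ≤ r →
      dHell ρ
        (fun u => Real.exp (-Φ u δ) / ∫ v, Real.exp (-Φ v δ) ∂ρ)
        (fun u => Real.exp (-Φ u δ') / ∫ v, Real.exp (-Φ v δ') ∂ρ)
        ≤ C * ‖δ - δ'‖ := by
  classical
  set Z : EuclideanSpace ℝ (Fin k) → ℝ := fun δ => ∫ v, Real.exp (-Φ v δ) ∂ρ with hZdef
  set c : ℝ := Real.exp (-Φstar) * (ρ Ur).toReal with hcdef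
  have hc : 0 < c :=
    mul_pos (Real.exp_pos _) (ENNReal.toReal_pos hUrpos.ne' (measure_ne_top ρ Ur))
  have hGint : Integrable G ρ := hG.integrable one_le_two
  have hG2int : Integrable (fun u => G u ^ 2) ρ := hG.integrable_sq
  set L : ℝ := ∫ u, G u ∂ρ with hLdef
  have hLnn : 0 ≤ L := integral_nonneg fun u => hGnonneg u
  set M : ℝ := ∫ u, G u ^ 2 ∂ρ with hMdef
  have hMnn : 0 ≤ M := integral_nonneg fun u => sq_nonneg _
  -- integrability of the exponential densities
  have hint : ∀ δ : EuclideanSpace ℝ (Fin k),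
      Integrable (fun u => Real.exp (-Φ u δ)) ρ := by
    intro δ
    refine (integrable_const (1 : ℝ)).mono'
      ((hΦmeas δ).neg.exp.aestronglyMeasurable) (Filter.Eventually.of_forall fun u => ?_)
    rw [Real.norm_eq_abs, abs_of_nonneg (Real.exp_pos _).le]
    exact Real.exp_le_one_iff.2 (neg_nonpos.2 (hΦnonneg u δ))
  have hZle1 : ∀ δ : EuclideanSpace ℝ (Fin k), Z δ ≤ 1 := by
    intro δ
    calc Z δ ≤ ∫ _, (1 : ℝ) ∂ρ := by
          refine integral_mono (hint δ) (integrable_const 1) fun u => ?_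
          exact Real.exp_le_one_iff.2 (neg_nonpos.2 (hΦnonneg u δ))
      _ = 1 := by simp
  have hZge : ∀ δ : EuclideanSpace ℝ (Fin k), ‖δ‖ ≤ r → c ≤ Z δ := by
    intro δ hδ
    calc c = ∫ _ in Ur, Real.exp (-Φstar) ∂ρ := by
          rw [setIntegral_const, smul_eq_mul, mul_comm]; rfl
      _ ≤ ∫ u in Ur, Real.exp (-Φ u δ) ∂ρ := by
          refine setIntegral_mono_on ((integrable_const _).integrableOn)
            ((hint δ).integrableOn) hUrmeas fun u hu => ?_
          exact Real.exp_le_exp.2 (neg_le_neg (hbound u hu δ hδ))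
      _ ≤ Z δ := setIntegral_le_integral (hint δ)
          (Filter.Eventually.of_forall fun u => (Real.exp_pos _).le)
  have hZpos : ∀ δ : EuclideanSpace ℝ (Fin k), ‖δ‖ ≤ r → 0 < Z δ :=
    fun δ hδ => lt_of_lt_of_le hc (hZge δ hδ)
  set A : ℝ := 1 / (2 * Real.sqrt c) with hAdef
  set B : ℝ := L / (2 * c * Real.sqrt c) with hBdef
  have hscpos : 0 < Real.sqrt c := Real.sqrt_pos.2 hc
  have hApos : 0 < A := by positivity
  have hBnn : 0 ≤ B := by positivity
  refine ⟨Real.sqrt (2 * A ^ 2 * M + 2 * B ^ 2) + 1, by positivity, ?_⟩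
  intro δ δ' hδ hδ'
  set t : ℝ := ‖δ - δ'‖ with htdef
  have ht : 0 ≤ t := norm_nonneg _
  -- bound on |Z δ - Z δ'|
  have hZdiff : |Z δ - Z δ'| ≤ L * t := by
    have h1 : Z δ - Z δ' = ∫ u, (Real.exp (-Φ u δ) - Real.exp (-Φ u δ')) ∂ρ :=
      (integral_sub (hint δ) (hint δ')).symm
    rw [h1]
    calc |∫ u, (Real.exp (-Φ u δ) - Real.exp (-Φ u δ')) ∂ρ|
        ≤ ∫ u, |Real.exp (-Φ u δ) - Real.exp (-Φ u δ')| ∂ρ := by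
          simpa [Real.norm_eq_abs] using
            norm_integral_le_integral_norm (fun u => Real.exp (-Φ u δ) - Real.exp (-Φ u δ'))
      _ ≤ ∫ u, G u * t ∂ρ := by
          refine integral_mono ((hint δ).sub (hint δ')).abs (hGint.mul_const t) fun u => ?_
          calc |Real.exp (-Φ u δ) - Real.exp (-Φ u δ')|
              ≤ |Φ u δ - Φ u δ'| := exp_neg_lip (hΦnonneg u δ) (hΦnonneg u δ')
            _ ≤ G u * t := hLip u δ δ' hδ hδ'
      _ = L * t := by rw [integral_mul_const]
  -- pointwise bound on the Hellinger integrand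
  have hsZ : Real.sqrt c ≤ Real.sqrt (Z δ) := Real.sqrt_le_sqrt (hZge δ hδ)
  have hsZ' : Real.sqrt c ≤ Real.sqrt (Z δ') := Real.sqrt_le_sqrt (hZge δ' hδ')
  have hsZpos : 0 < Real.sqrt (Z δ) := lt_of_lt_of_le hscpos hsZ
  have hsZ'pos : 0 < Real.sqrt (Z δ') := lt_of_lt_of_le hscpos hsZ'
  have hss' : |Real.sqrt (Z δ) - Real.sqrt (Z δ')| ≤ L * t / (2 * Real.sqrt c) := by
    have e1 : (Real.sqrt (Z δ) - Real.sqrt (Z δ')) * (Real.sqrt (Z δ) + Real.sqrt (Z δ'))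
        = Z δ - Z δ' := by
      have := Real.sq_sqrt (hZpos δ hδ).le
      have := Real.sq_sqrt (hZpos δ' hδ').le
      nlinarith
    have e2 : |Real.sqrt (Z δ) - Real.sqrt (Z δ')|
        * (Real.sqrt (Z δ) + Real.sqrt (Z δ')) = |Z δ - Z δ'| := by
      have hsum : (0:ℝ) < Real.sqrt (Z δ) + Real.sqrt (Z δ') := by linarith
      rw [← e1, abs_mul, abs_of_pos hsum]
    rw [le_div_iff₀ (by positivity)]
    nlinarith [abs_nonneg (Real.sqrt (Z δ) - Real.sqrt (Z δ')), abs_nonneg (Z δ - Z δ'), hsZ, hsZ', hscpos]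
  have hptwise : ∀ u,
      (Real.sqrt (Real.exp (-Φ u δ) / Z δ) - Real.sqrt (Real.exp (-Φ u δ') / Z δ')) ^ 2
        ≤ (2 * A ^ 2 * t ^ 2) * G u ^ 2 + 2 * B ^ 2 * t ^ 2 := by
    intro u
    have hf : Real.sqrt (Real.exp (-Φ u δ) / Z δ)
        = Real.exp (-Φ u δ / 2) / Real.sqrt (Z δ) := by
      rw [Real.sqrt_div (Real.exp_pos _).le, sqrt_exp']
    have hh : Real.sqrt (Real.exp (-Φ u δ') / Z δ')
        = Real.exp (-Φ u δ' / 2) / Real.sqrt (Z δ') := by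
      rw [Real.sqrt_div (Real.exp_pos _).le, sqrt_exp']
    rw [hf, hh]
    set a := Real.exp (-Φ u δ / 2) with hadef
    set b := Real.exp (-Φ u δ' / 2) with hbdef
    set s := Real.sqrt (Z δ) with hsdef
    set s' := Real.sqrt (Z δ') with hs'def
    have hb1 : b ≤ 1 := Real.exp_le_one_iff.2 (by nlinarith [hΦnonneg u δ'])
    have hbpos : 0 < b := Real.exp_pos _
    have hab : |a - b| ≤ G u * t / 2 := by
      have h1 : |a - b| ≤ |Φ u δ / 2 - Φ u δ' / 2| := by
        have := exp_neg_lip (x := Φ u δ / 2) (y := Φ u δ' / 2)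
          (by linarith [hΦnonneg u δ]) (by linarith [hΦnonneg u δ'])
        simpa [hadef, hbdef, neg_div] using this
      have h2 : |Φ u δ / 2 - Φ u δ' / 2| = |Φ u δ - Φ u δ'| / 2 := by
        rw [show Φ u δ / 2 - Φ u δ' / 2 = (Φ u δ - Φ u δ') / 2 by ring, abs_div]
        norm_num
      have h3 := hLip u δ δ' hδ hδ'
      rw [h2] at h1
      linarith
    have hdecomp : a / s - b / s' = (a - b) / s + b * (s' - s) / (s * s') := by
      field_simp
      ring
    have habs : |a / s - b / s'| ≤ A * G u * t + B * t := by
      calc |a / s - b / s'| ≤ |(a - b) / s| + |b * (s' - s) / (s * s')| := by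
            rw [hdecomp]; exact abs_add_le _ _
        _ = |a - b| / s + b * |s' - s| / (s * s') := by
            rw [abs_div, abs_div, abs_of_pos hsZpos, abs_mul, abs_of_pos hbpos,
              abs_of_pos (mul_pos hsZpos hsZ'pos)]
        _ ≤ (G u * t / 2) / Real.sqrt c + (L * t / (2 * Real.sqrt c)) / c := by
            have hn1 : 0 ≤ G u * t / 2 := by
              have := mul_nonneg (hGnonneg u) ht; linarith
            have hn2 : 0 ≤ L * t / (2 * Real.sqrt c) :=
              div_nonneg (mul_nonneg hLnn ht) (by positivity)
            have hnum2 : b * |s' - s| ≤ L * t / (2 * Real.sqrt c) := by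
              calc b * |s' - s| ≤ 1 * |s' - s| :=
                    mul_le_mul_of_nonneg_right hb1 (abs_nonneg _)
                _ = |s - s'| := by rw [one_mul, abs_sub_comm]
                _ ≤ L * t / (2 * Real.sqrt c) := hss'
            have hden2 : c ≤ s * s' := by
              calc c = Real.sqrt c * Real.sqrt c := (Real.mul_self_sqrt hc.le).symm
                _ ≤ s * s' := mul_le_mul hsZ hsZ' hscpos.le hsZpos.le
            exact add_le_add (div_le_div₀ hn1 hab hscpos hsZ)
              (div_le_div₀ hn2 hnum2 hc hden2)
        _ = A * G u * t + B * t := by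
            rw [hAdef, hBdef]
            field_simp
    have hsq : (a / s - b / s') ^ 2 ≤ (A * G u * t + B * t) ^ 2 := by
      rw [← sq_abs]
      exact pow_le_pow_left₀ (abs_nonneg _) habs 2
    nlinarith [sq_nonneg (A * G u * t - B * t), hGnonneg u]
  -- integrate the pointwise bound
  have hdomint : Integrable (fun u => (2 * A ^ 2 * t ^ 2) * G u ^ 2 + 2 * B ^ 2 * t ^ 2) ρ :=
    (hG2int.const_mul _).add (integrable_const _)
  have hI : ∫ u, (Real.sqrt (Real.exp (-Φ u δ) / Z δ)
      - Real.sqrt (Real.exp (-Φ u δ') / Z δ')) ^ 2 ∂ρ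
      ≤ 2 * A ^ 2 * t ^ 2 * M + 2 * B ^ 2 * t ^ 2 := by
    calc ∫ u, (Real.sqrt (Real.exp (-Φ u δ) / Z δ)
          - Real.sqrt (Real.exp (-Φ u δ') / Z δ')) ^ 2 ∂ρ
        ≤ ∫ u, ((2 * A ^ 2 * t ^ 2) * G u ^ 2 + 2 * B ^ 2 * t ^ 2) ∂ρ :=
          integral_mono_of_nonneg (Filter.Eventually.of_forall fun u => sq_nonneg _)
            hdomint (Filter.Eventually.of_forall hptwise)
      _ = 2 * A ^ 2 * t ^ 2 * M + 2 * B ^ 2 * t ^ 2 := by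
          rw [integral_add (hG2int.const_mul _) (integrable_const _),
            integral_const_mul, integral_const]
          simp [hMdef]
  -- conclude
  have key : dHell ρ
      (fun u => Real.exp (-Φ u δ) / Z δ) (fun u => Real.exp (-Φ u δ') / Z δ')
      ≤ Real.sqrt (2 * A ^ 2 * M + 2 * B ^ 2) * t := by
    unfold dHell
    calc Real.sqrt ((1 / 2) * ∫ u, (Real.sqrt (Real.exp (-Φ u δ) / Z δ)
          - Real.sqrt (Real.exp (-Φ u δ') / Z δ')) ^ 2 ∂ρ)
        ≤ Real.sqrt ((2 * A ^ 2 * M + 2 * B ^ 2) * t ^ 2) := by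
          apply Real.sqrt_le_sqrt
          nlinarith [hI, mul_nonneg (mul_nonneg (sq_nonneg A) hMnn) (sq_nonneg t),
            mul_nonneg (sq_nonneg B) (sq_nonneg t)]
      _ = Real.sqrt (2 * A ^ 2 * M + 2 * B ^ 2) * t := by
          rw [Real.sqrt_mul (by positivity), Real.sqrt_sq ht]
  calc dHell ρ (fun u => Real.exp (-Φ u δ) / Z δ) (fun u => Real.exp (-Φ u δ') / Z δ')
      ≤ Real.sqrt (2 * A ^ 2 * M + 2 * B ^ 2) * t := key
    _ ≤ (Real.sqrt (2 * A ^ 2 * M + 2 * B ^ 2) + 1) * t :=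
        mul_le_mul_of_nonneg_right (by linarith) ht
end

section
/- Let G : U → ℝ^k be measurable with g⋆ := sup_{u∈U} |G(u)|_Σ < ∞, and for δ ∈ ℝ^k define Φ(u;δ) = (1/2)|δ − G(u)|_Σ². Let ρ^δ be the probability measure on (U,Θ) with density exp(−Φ(u;δ))/Z(δ) with respect to ρ, where Z(δ) = ∫_U exp(−Φ(u;δ)) dρ(u). Then for every r > 0 there exists C(r) > 0 such that for all δ, δ' ∈ ℝ^k with |δ|_Σ ≤ r and |δ'|_Σ ≤ r, d_Hell(ρ^δ, ρ^{δ'}) ≤ C(r) |δ − δ'|_Σ. -/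
open MeasureTheory Matrix

/-- The covariance-weighted norm `|v|_Σ = |Σ^{-1/2} v| = √(vᵀ Σ⁻¹ v)` on `ℝ^k`
associated with a symmetric positive definite matrix `Σ`. -/
noncomputable def normSigma {k : ℕ} (S : Matrix (Fin k) (Fin k) ℝ)
    (v : Fin k → ℝ) : ℝ :=
  Real.sqrt (v ⬝ᵥ (S⁻¹ *ᵥ v))

/-- The Bayesian potential `Φ(u;δ) = ½ |δ - G(u)|_Σ²` for a forward map `G`. -/
noncomputable def PhiPot {U : Type*} {k : ℕ} (S : Matrix (Fin k) (Fin k) ℝ)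
    (G : U → Fin k → ℝ) (u : U) (δ : Fin k → ℝ) : ℝ :=
  (1 / 2) * (normSigma S (δ - G u)) ^ 2

open scoped MatrixOrder in
lemma ns_euclid {k : ℕ} {S : Matrix (Fin k) (Fin k) ℝ} (hS : S.PosDef) (v : Fin k → ℝ) :
    normSigma S v =
      ‖(WithLp.equiv 2 (Fin k → ℝ)).symm (CFC.sqrt S⁻¹ *ᵥ v)‖ := by
  set Q := CFC.sqrt S⁻¹ with hQ
  have hsym : Qᵀ = Q := by
    have := (CFC.sqrt_nonneg S⁻¹).posSemidef.1
    rw [← Matrix.conjTranspose_eq_transpose_of_trivial]; exact this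
  have hdot : v ⬝ᵥ S⁻¹ *ᵥ v = (Q *ᵥ v) ⬝ᵥ (Q *ᵥ v) := by
    conv_lhs => rw [← CFC.sqrt_mul_sqrt_self S⁻¹ hS.inv.posSemidef.nonneg, ← hQ]
    rw [← Matrix.mulVec_mulVec, dotProduct_mulVec, ← Matrix.vecMul_transpose, hsym]
  rw [normSigma, hdot, EuclideanSpace.norm_eq]
  congr 1
  simp [dotProduct, sq_abs, pow_two, mul_comm]

lemma ns_nonneg {k : ℕ} (S : Matrix (Fin k) (Fin k) ℝ) (v : Fin k → ℝ) :
    0 ≤ normSigma S v := Real.sqrt_nonneg _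

open scoped MatrixOrder in
lemma ns_sub_le {k : ℕ} {S : Matrix (Fin k) (Fin k) ℝ} (hS : S.PosDef) (a b : Fin k → ℝ) :
    normSigma S (a - b) ≤ normSigma S a + normSigma S b := by
  rw [ns_euclid hS, ns_euclid hS, ns_euclid hS]
  have h : CFC.sqrt S⁻¹ *ᵥ (a - b)
      = CFC.sqrt S⁻¹ *ᵥ a - CFC.sqrt S⁻¹ *ᵥ b :=
    Matrix.mulVec_sub _ _ _
  rw [h, show ∀ x y : Fin k → ℝ, (WithLp.equiv 2 (Fin k → ℝ)).symm (x - y) = (WithLp.equiv 2 (Fin k → ℝ)).symm x - (WithLp.equiv 2 (Fin k → ℝ)).symm y from fun _ _ => rfl]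
  exact norm_sub_le _ _

open scoped MatrixOrder in
lemma ns_sq_sub {k : ℕ} {S : Matrix (Fin k) (Fin k) ℝ} (hS : S.PosDef) (a b : Fin k → ℝ) :
    |normSigma S a ^ 2 - normSigma S b ^ 2|
      ≤ normSigma S (a - b) * (normSigma S a + normSigma S b) := by
  rw [ns_euclid hS, ns_euclid hS, ns_euclid hS (a - b)]
  have h : CFC.sqrt S⁻¹ *ᵥ (a - b)
      = CFC.sqrt S⁻¹ *ᵥ a - CFC.sqrt S⁻¹ *ᵥ b :=
    Matrix.mulVec_sub _ _ _
  rw [h, show ∀ x y : Fin k → ℝ, (WithLp.equiv 2 (Fin k → ℝ)).symm (x - y) = (WithLp.equiv 2 (Fin k → ℝ)).symm x - (WithLp.equiv 2 (Fin k → ℝ)).symm y from fun _ _ => rfl]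
  set x := (WithLp.equiv 2 (Fin k → ℝ)).symm (CFC.sqrt S⁻¹ *ᵥ a)
  set y := (WithLp.equiv 2 (Fin k → ℝ)).symm (CFC.sqrt S⁻¹ *ᵥ b)
  have h2 : ‖x‖ ^ 2 - ‖y‖ ^ 2 = (inner ℝ (x - y) (x + y) : ℝ) := by
    rw [inner_sub_left, inner_add_right, inner_add_right,
      real_inner_self_eq_norm_sq, real_inner_self_eq_norm_sq, real_inner_comm y x]
    ring
  rw [h2]
  calc |(inner ℝ (x - y) (x + y) : ℝ)| ≤ ‖x - y‖ * ‖x + y‖ := abs_real_inner_le_norm _ _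
    _ ≤ ‖x - y‖ * (‖x‖ + ‖y‖) :=
        mul_le_mul_of_nonneg_left (norm_add_le x y) (norm_nonneg _)

lemma phi_meas {U : Type*} [MeasurableSpace U] {k : ℕ} (S : Matrix (Fin k) (Fin k) ℝ)
    {G : U → Fin k → ℝ} (hGmeas : Measurable G) (δ : Fin k → ℝ) :
    Measurable fun u => PhiPot S G u δ := by
  unfold PhiPot normSigma
  simp only [dotProduct, Matrix.mulVec]
  fun_prop

lemma exp_neg_lip_s8 {a b : ℝ} (ha : 0 ≤ a) (hb : 0 ≤ b) :
    |Real.exp (-a) - Real.exp (-b)| ≤ |a - b| := by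
  wlog h : b ≤ a generalizing a b
  · rw [abs_sub_comm, abs_sub_comm a b]; exact this hb ha (le_of_not_ge h)
  rw [abs_of_nonpos (by simpa using Real.exp_le_exp.2 (neg_le_neg h)),
    abs_of_nonneg (sub_nonneg.2 h)]
  have key : Real.exp (-a) ≥ Real.exp (-b) * (1 - (a - b)) := by
    have h1 : -(a - b) + 1 ≤ Real.exp (-(a - b)) := Real.add_one_le_exp _
    calc Real.exp (-b) * (1 - (a - b)) ≤ Real.exp (-b) * Real.exp (-(a - b)) := by
          apply mul_le_mul_of_nonneg_left _ (Real.exp_pos _).le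
          linarith
      _ = Real.exp (-a) := by rw [← Real.exp_add]; ring_nf
  have hexp1 : Real.exp (-b) ≤ 1 := Real.exp_le_one_iff.2 (by linarith)
  nlinarith [Real.exp_pos (-b), sub_nonneg.2 h]

set_option maxHeartbeats 1000000 in
/-- local Lipschitz continuity, in the Hellinger metric, of the
posterior `dρ^δ/dρ = exp(-Φ(·;δ))/Z(δ)` with respect to the data `δ`, for the
potential `Φ(u;δ) = ½|δ - G(u)|_Σ²` of a uniformly bounded forward map `G`. -/
theorem stmt8
    {U : Type*} [MeasurableSpace U]
    (ρ : Measure U) [IsProbabilityMeasure ρ]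
    (k : ℕ) (S : Matrix (Fin k) (Fin k) ℝ) (hS : S.PosDef)
    (G : U → Fin k → ℝ) (hGmeas : Measurable G)
    (gstar : ℝ) (hg : ∀ u, normSigma S (G u) ≤ gstar) :
    ∀ r > (0 : ℝ), ∃ C > (0 : ℝ), ∀ δ δ' : Fin k → ℝ,
      normSigma S δ ≤ r → normSigma S δ' ≤ r →
      dHell ρ
        (fun u => Real.exp (-PhiPot S G u δ) /
          ∫ v, Real.exp (-PhiPot S G v δ) ∂ρ)
        (fun u => Real.exp (-PhiPot S G u δ') /
          ∫ v, Real.exp (-PhiPot S G v δ') ∂ρ)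
        ≤ C * normSigma S (δ - δ') := by
  intro r hr
  have hU : Nonempty U := by
    by_contra h
    rw [not_nonempty_iff] at h
    have h1 : ρ Set.univ = 1 := measure_univ
    rw [Set.univ_eq_empty_iff.mpr h, measure_empty] at h1
    exact zero_ne_one h1
  have hg0 : 0 ≤ gstar := le_trans (ns_nonneg S _) (hg hU.some)
  set L : ℝ := r + gstar with hL
  have hLpos : 0 < L := by positivity
  set M : ℝ := L ^ 2 / 2 with hM
  set s : ℝ := Real.exp (-(M / 2)) with hs
  have hspos : 0 < s := Real.exp_pos _
  set C : ℝ := L / (2 * s) + L / (2 * s ^ 3) with hC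
  have hCpos : 0 < C := by positivity
  refine ⟨C, hCpos, ?_⟩
  intro δ δ' hδ hδ'
  set d := normSigma S (δ - δ') with hd
  have hd0 : 0 ≤ d := ns_nonneg S _
  -- pointwise bounds on Φ
  have hΦ0 : ∀ (ε : Fin k → ℝ) (u : U), 0 ≤ PhiPot S G u ε := by
    intro ε u; unfold PhiPot; positivity
  have hnsle : ∀ (ε : Fin k → ℝ), normSigma S ε ≤ r → ∀ u, normSigma S (ε - G u) ≤ L := by
    intro ε hε u
    exact le_trans (ns_sub_le hS ε (G u)) (by linarith [hg u])
  have hΦM : ∀ (ε : Fin k → ℝ), normSigma S ε ≤ r → ∀ u, PhiPot S G u ε ≤ M := by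
    intro ε hε u
    have h1 := hnsle ε hε u
    have h2 : normSigma S (ε - G u) ^ 2 ≤ L ^ 2 := by
      nlinarith [ns_nonneg S (ε - G u)]
    unfold PhiPot
    rw [hM]
    nlinarith [h2]
  -- integrability
  have hint : ∀ ε : Fin k → ℝ, Integrable (fun u => Real.exp (-PhiPot S G u ε)) ρ := by
    intro ε
    apply Integrable.mono' (integrable_const (1 : ℝ))
      ((Real.measurable_exp.comp (phi_meas S hGmeas ε).neg).aestronglyMeasurable)
    refine ae_of_all _ fun u => ?_
    simp only [Function.comp_apply, Real.norm_eq_abs]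
    rw [abs_of_pos (Real.exp_pos _)]
    exact Real.exp_le_one_iff.2 (neg_nonpos.2 (hΦ0 ε u))
  -- lower bound on Z
  have hZlb : ∀ ε : Fin k → ℝ, normSigma S ε ≤ r →
      Real.exp (-M) ≤ ∫ v, Real.exp (-PhiPot S G v ε) ∂ρ := by
    intro ε hε
    have h := integral_mono (μ := ρ) (integrable_const (Real.exp (-M))) (hint ε)
      (fun u => Real.exp_le_exp.2 (neg_le_neg (hΦM ε hε u)))
    simpa using h
  set Z := ∫ v, Real.exp (-PhiPot S G v δ) ∂ρ with hZ
  set Z' := ∫ v, Real.exp (-PhiPot S G v δ') ∂ρ with hZ'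
  have hZpos : 0 < Z := lt_of_lt_of_le (Real.exp_pos _) (hZlb δ hδ)
  have hZ'pos : 0 < Z' := lt_of_lt_of_le (Real.exp_pos _) (hZlb δ' hδ')
  have hs2 : s ^ 2 = Real.exp (-M) := by
    rw [sq, hs, ← Real.exp_add]
    congr 1
    ring
  have hsqZ : s ≤ Real.sqrt Z := Real.le_sqrt_of_sq_le (by rw [hs2]; exact hZlb δ hδ)
  have hsqZ' : s ≤ Real.sqrt Z' := Real.le_sqrt_of_sq_le (by rw [hs2]; exact hZlb δ' hδ')
  have hsqZpos : 0 < Real.sqrt Z := lt_of_lt_of_le hspos hsqZ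
  have hsqZ'pos : 0 < Real.sqrt Z' := lt_of_lt_of_le hspos hsqZ'
  -- Lipschitz bound on Φ in δ
  have hPhiLip : ∀ u, |PhiPot S G u δ - PhiPot S G u δ'| ≤ L * d := by
    intro u
    unfold PhiPot
    rw [← mul_sub, abs_mul, abs_of_nonneg (by norm_num : (0:ℝ) ≤ 1/2)]
    have h1 := ns_sq_sub hS (δ - G u) (δ' - G u)
    have h2 : (δ - G u) - (δ' - G u) = δ - δ' := by abel
    rw [h2, ← hd] at h1
    have h3 := hnsle δ hδ u
    have h4 := hnsle δ' hδ' u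
    nlinarith [ns_nonneg S (δ - G u), ns_nonneg S (δ' - G u)]
  -- Lipschitz bound on Z
  have hZLip : |Z - Z'| ≤ L * d := by
    rw [hZ, hZ', ← integral_sub (hint δ) (hint δ')]
    calc |∫ u, (Real.exp (-PhiPot S G u δ) - Real.exp (-PhiPot S G u δ')) ∂ρ|
        ≤ ∫ u, |Real.exp (-PhiPot S G u δ) - Real.exp (-PhiPot S G u δ')| ∂ρ := by
          simpa [Real.norm_eq_abs] using
            norm_integral_le_integral_norm
              (fun u => Real.exp (-PhiPot S G u δ) - Real.exp (-PhiPot S G u δ'))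
              (μ := ρ)
      _ ≤ ∫ _u, L * d ∂ρ := integral_mono ((hint δ).sub (hint δ')).abs (integrable_const _)
          (fun u => le_trans (exp_neg_lip_s8 (hΦ0 δ u) (hΦ0 δ' u)) (hPhiLip u))
      _ = L * d := by simp
  -- Lipschitz bound on √Z
  have hsqLip : |Real.sqrt Z - Real.sqrt Z'| ≤ L * d / (2 * s) := by
    rw [le_div_iff₀ (by positivity)]
    have hmul : (Real.sqrt Z - Real.sqrt Z') * (Real.sqrt Z + Real.sqrt Z') = Z - Z' := by
      have heq : (Real.sqrt Z - Real.sqrt Z') * (Real.sqrt Z + Real.sqrt Z')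
          = Real.sqrt Z ^ 2 - Real.sqrt Z' ^ 2 := by ring
      rw [heq, Real.sq_sqrt hZpos.le, Real.sq_sqrt hZ'pos.le]
    calc |Real.sqrt Z - Real.sqrt Z'| * (2 * s)
        ≤ |Real.sqrt Z - Real.sqrt Z'| * (Real.sqrt Z + Real.sqrt Z') := by
          apply mul_le_mul_of_nonneg_left (by linarith) (abs_nonneg _)
      _ = |Z - Z'| := by
          rw [← abs_of_nonneg (by positivity : 0 ≤ Real.sqrt Z + Real.sqrt Z'), ← abs_mul, hmul]
      _ ≤ L * d := hZLip
  -- pointwise bound on the difference of root-densities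
  have hpt : ∀ u, |Real.sqrt (Real.exp (-PhiPot S G u δ) / Z)
      - Real.sqrt (Real.exp (-PhiPot S G u δ') / Z')| ≤ C * d := by
    intro u
    rw [Real.sqrt_div (Real.exp_pos _).le, Real.sqrt_div (Real.exp_pos _).le,
      ← Real.exp_half, ← Real.exp_half]
    set a := Real.exp (-PhiPot S G u δ / 2) with ha
    set b := Real.exp (-PhiPot S G u δ' / 2) with hb
    have hapos : 0 < a := Real.exp_pos _
    have hbpos : 0 < b := Real.exp_pos _
    have hb1 : b ≤ 1 := Real.exp_le_one_iff.2 (by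
      have := hΦ0 δ' u
      rw [neg_div]
      simp only [neg_nonpos]
      positivity)
    have hsplit : a / Real.sqrt Z - b / Real.sqrt Z'
        = (a - b) / Real.sqrt Z
          + b * ((Real.sqrt Z' - Real.sqrt Z) / (Real.sqrt Z * Real.sqrt Z')) := by
      field_simp
      ring
    have h3 := exp_neg_lip_s8 (a := PhiPot S G u δ / 2) (b := PhiPot S G u δ' / 2)
      (by linarith [hΦ0 δ u]) (by linarith [hΦ0 δ' u])
    rw [show -(PhiPot S G u δ / 2) = -PhiPot S G u δ / 2 from by ring,
      show -(PhiPot S G u δ' / 2) = -PhiPot S G u δ' / 2 from by ring,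
      ← ha, ← hb] at h3
    have hab : |a - b| ≤ L * d / 2 := by
      have e3 : |PhiPot S G u δ / 2 - PhiPot S G u δ' / 2|
          = |PhiPot S G u δ - PhiPot S G u δ'| / 2 := by
        rw [show PhiPot S G u δ / 2 - PhiPot S G u δ' / 2
            = (PhiPot S G u δ - PhiPot S G u δ') / 2 from by ring, abs_div, abs_two]
      rw [e3] at h3
      have h4 := hPhiLip u
      nlinarith [h3, h4]
    rw [hsplit]
    have t1 : |(a - b) / Real.sqrt Z| ≤ (L * d / 2) / s := by
      rw [abs_div, abs_of_pos hsqZpos]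
      exact div_le_div₀ (by positivity) hab hspos hsqZ
    have t2 : |b * ((Real.sqrt Z' - Real.sqrt Z) / (Real.sqrt Z * Real.sqrt Z'))|
        ≤ (L * d / (2 * s)) / (s * s) := by
      rw [abs_mul, abs_div, abs_of_pos (by positivity : (0:ℝ) < Real.sqrt Z * Real.sqrt Z')]
      have inner_le : |Real.sqrt Z' - Real.sqrt Z| / (Real.sqrt Z * Real.sqrt Z')
          ≤ (L * d / (2 * s)) / (s * s) := by
        apply div_le_div₀ (by positivity) _ (by positivity)
          (mul_le_mul hsqZ hsqZ' hspos.le (Real.sqrt_nonneg _))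
        rw [abs_sub_comm]
        exact hsqLip
      calc |b| * (|Real.sqrt Z' - Real.sqrt Z| / (Real.sqrt Z * Real.sqrt Z'))
          ≤ 1 * ((L * d / (2 * s)) / (s * s)) := by
            apply mul_le_mul _ inner_le (by positivity) (by norm_num)
            rwa [abs_of_pos hbpos]
        _ = (L * d / (2 * s)) / (s * s) := one_mul _
    calc |(a - b) / Real.sqrt Z
          + b * ((Real.sqrt Z' - Real.sqrt Z) / (Real.sqrt Z * Real.sqrt Z'))|
        ≤ |(a - b) / Real.sqrt Z|
          + |b * ((Real.sqrt Z' - Real.sqrt Z) / (Real.sqrt Z * Real.sqrt Z'))| := abs_add_le _ _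
      _ ≤ (L * d / 2) / s + (L * d / (2 * s)) / (s * s) := add_le_add t1 t2
      _ = C * d := by rw [hC]; field_simp
  -- conclude
  unfold dHell
  have hintle : (∫ u, (Real.sqrt (Real.exp (-PhiPot S G u δ) / Z)
      - Real.sqrt (Real.exp (-PhiPot S G u δ') / Z')) ^ 2 ∂ρ) ≤ (C * d) ^ 2 := by
    have h := integral_mono_of_nonneg (μ := ρ)
      (f := fun u => (Real.sqrt (Real.exp (-PhiPot S G u δ) / Z)
        - Real.sqrt (Real.exp (-PhiPot S G u δ') / Z')) ^ 2)
      (g := fun _ => (C * d) ^ 2)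
      (ae_of_all _ fun u => sq_nonneg _) (integrable_const _)
      (ae_of_all _ fun u => by
        have h1 := hpt u
        have h2 := abs_le.1 h1
        nlinarith [h2.1, h2.2])
    simpa using h
  have hnn : 0 ≤ ∫ u, (Real.sqrt (Real.exp (-PhiPot S G u δ) / Z)
      - Real.sqrt (Real.exp (-PhiPot S G u δ') / Z')) ^ 2 ∂ρ :=
    integral_nonneg fun u => sq_nonneg _
  calc Real.sqrt ((1 / 2) * ∫ u, (Real.sqrt (Real.exp (-PhiPot S G u δ) / Z)
        - Real.sqrt (Real.exp (-PhiPot S G u δ') / Z')) ^ 2 ∂ρ)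
      ≤ Real.sqrt ((C * d) ^ 2) := Real.sqrt_le_sqrt (by nlinarith [hintle, hnn])
    _ = C * d := Real.sqrt_sq (by positivity)
end

section
/- For every u ∈ U and every measurable set A ⊆ U, the independence-sampler kernel satisfies the minorization p(u, A) ≥ exp(−Φ⋆) ρ(A). -/
open MeasureTheory

/-- The independence-sampler Metropolis–Hastings transition kernel
`p(u,A) = ∫_A α(u,v) dρ(v) + (1 - ∫_U α(u,v) dρ(v)) 1_A(u)` with acceptance
probability `α(u,v) = min(1, exp(Φ(u) - Φ(v)))` and proposal distribution `ρ`. -/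
noncomputable def indepKernel {U : Type*} [MeasurableSpace U]
    (ρ : Measure U) (Φ : U → ℝ) (u : U) (A : Set U) : ℝ :=
  (∫ v in A, min 1 (Real.exp (Φ u - Φ v)) ∂ρ)
    + (1 - ∫ v, min 1 (Real.exp (Φ u - Φ v)) ∂ρ) *
      A.indicator (fun _ => (1 : ℝ)) u

/-- Doeblin minorization of the independence sampler:
`p(u, A) ≥ exp(-Φ⋆) ρ(A)` for every `u` and every measurable `A`. -/
theorem stmt12
    {U : Type*} [MeasurableSpace U]
    (ρ : Measure U) [IsProbabilityMeasure ρ]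
    (Φstar : ℝ) (hΦstar : 0 ≤ Φstar)
    (Φ : U → ℝ) (hΦmeas : Measurable Φ)
    (hΦ : ∀ u, 0 ≤ Φ u ∧ Φ u ≤ Φstar) :
    ∀ u : U, ∀ A : Set U, MeasurableSet A →
      Real.exp (-Φstar) * (ρ A).toReal ≤ indepKernel ρ Φ u A := by
  intro u A hA
  set f : U → ℝ := fun v => min 1 (Real.exp (Φ u - Φ v)) with hf
  have hfmeas : Measurable f :=
    measurable_const.min ((measurable_const.sub hΦmeas).exp)
  have hf0 : ∀ v, 0 ≤ f v := fun v =>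
    le_min zero_le_one (Real.exp_pos _).le
  have hf1 : ∀ v, f v ≤ 1 := fun v => min_le_left _ _
  have hfint : Integrable f ρ := by
    refine Integrable.mono' (integrable_const 1) hfmeas.aestronglyMeasurable
      (Filter.Eventually.of_forall fun v => ?_)
    rw [Real.norm_eq_abs, abs_of_nonneg (hf0 v)]
    exact hf1 v
  have hlb : ∀ v, Real.exp (-Φstar) ≤ f v := by
    intro v
    refine le_min (Real.exp_le_one_iff.2 (by linarith)) ?_
    exact Real.exp_le_exp.2 (by linarith [(hΦ u).1, (hΦ v).2])
  have h1 : Real.exp (-Φstar) * (ρ A).toReal ≤ ∫ v in A, f v ∂ρ := by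
    have := setIntegral_mono_on (integrableOn_const (measure_lt_top ρ A).ne)
      (hfint.integrableOn) hA (fun v _ => hlb v)
    simpa [smul_eq_mul, mul_comm, Measure.real] using this
  have h2 : 0 ≤ (1 - ∫ v, f v ∂ρ) * A.indicator (fun _ => (1 : ℝ)) u := by
    apply mul_nonneg
    · have : ∫ v, f v ∂ρ ≤ ∫ _v, (1 : ℝ) ∂ρ :=
        integral_mono hfint (integrable_const 1) hf1
      simpa using this
    · exact Set.indicator_nonneg (fun _ _ => zero_le_one) u
  calc Real.exp (-Φstar) * (ρ A).toReal ≤ ∫ v in A, f v ∂ρ := h1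
    _ ≤ indepKernel ρ Φ u A := le_add_of_nonneg_right h2
end

section
/- The independence-sampler kernel p is reversible with respect to the posterior measure π: for all measurable sets A, B ⊆ U, ∫_A p(u, B) dπ(u) = ∫_B p(u, A) dπ(u). In particular π is invariant for p, i.e. ∫_U p(u, A) dπ(u) = π(A) for every measurable A. -/
open MeasureTheory

/-- The posterior measure `π` with density `exp(-Φ)/Z`, `Z = ∫ exp(-Φ) dρ`,
with respect to the prior `ρ`. -/
noncomputable def posterior {U : Type*} [MeasurableSpace U]
    (ρ : Measure U) (Φ : U → ℝ) : Measure U :=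
  ρ.withDensity fun u =>
    ENNReal.ofReal (Real.exp (-Φ u) / ∫ v, Real.exp (-Φ v) ∂ρ)

open scoped ENNReal NNReal

section Aux
variable {U : Type*} [MeasurableSpace U]

lemma conv13 (ρ : Measure U) (Φ : U → ℝ) (hΦmeas : Measurable Φ)
    {A : Set U} (hA : MeasurableSet A) (f : U → ℝ) :
    ∫ u in A, f u ∂(posterior ρ Φ)
      = ∫ u in A, (Real.exp (-Φ u) / ∫ v, Real.exp (-Φ v) ∂ρ) * f u ∂ρ := by
  have hZ : (0:ℝ) ≤ ∫ v, Real.exp (-Φ v) ∂ρ := integral_nonneg fun v => Real.exp_nonneg _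
  have hg : ∀ u, (0:ℝ) ≤ Real.exp (-Φ u) / ∫ v, Real.exp (-Φ v) ∂ρ :=
    fun u => div_nonneg (Real.exp_nonneg _) hZ
  have hm : Measurable fun u => (Real.exp (-Φ u) / ∫ v, Real.exp (-Φ v) ∂ρ).toNNReal :=
    ((hΦmeas.neg.exp).div_const _).real_toNNReal
  rw [posterior, show (fun u => ENNReal.ofReal (Real.exp (-Φ u) / ∫ v, Real.exp (-Φ v) ∂ρ))
      = fun u => ((Real.exp (-Φ u) / ∫ v, Real.exp (-Φ v) ∂ρ).toNNReal : ℝ≥0∞) from rfl,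
    setIntegral_withDensity_eq_setIntegral_smul₀ hm.aemeasurable f hA]
  refine setIntegral_congr_fun hA fun u _ => ?_
  simp [NNReal.smul_def, Real.coe_toNNReal _ (hg u)]

variable {U : Type*} [MeasurableSpace U]

lemma key13 (a b : ℝ) :
    Real.exp (-a) * min 1 (Real.exp (a - b)) = min (Real.exp (-a)) (Real.exp (-b)) := by
  rw [mul_min_of_nonneg _ _ (Real.exp_nonneg _), mul_one, ← Real.exp_add,
    show -a + (a - b) = -b by ring]

lemma rev13 (ρ : Measure U) [IsProbabilityMeasure ρ] (Φ : U → ℝ) (hΦmeas : Measurable Φ)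
    (hΦ0 : ∀ u, 0 ≤ Φ u) (Z : ℝ) (hZ : 0 ≤ Z)
    {A B : Set U} (hA : MeasurableSet A) (hB : MeasurableSet B) :
    ∫ u in A, (Real.exp (-Φ u) / Z) *
        ((∫ v in B, min 1 (Real.exp (Φ u - Φ v)) ∂ρ)
          + (1 - ∫ v, min 1 (Real.exp (Φ u - Φ v)) ∂ρ) * B.indicator (fun _ => (1:ℝ)) u) ∂ρ
      = ∫ u in B, (Real.exp (-Φ u) / Z) *
        ((∫ v in A, min 1 (Real.exp (Φ u - Φ v)) ∂ρ)
          + (1 - ∫ v, min 1 (Real.exp (Φ u - Φ v)) ∂ρ) * A.indicator (fun _ => (1:ℝ)) u) ∂ρ := by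
  have hC0 : (0:ℝ) ≤ 1 / Z := by positivity
  have hgm : Measurable fun u => Real.exp (-Φ u) / Z := (hΦmeas.neg.exp).div_const _
  have hg0 : ∀ u, 0 ≤ Real.exp (-Φ u) / Z := fun u => div_nonneg (Real.exp_nonneg _) hZ
  have hgC : ∀ u, Real.exp (-Φ u) / Z ≤ 1 / Z := fun u => by
    simp only [div_eq_mul_inv]
    exact mul_le_mul_of_nonneg_right
      (Real.exp_le_one_iff.2 (neg_nonpos.2 (hΦ0 u))) (inv_nonneg.2 hZ)
  have hα0 : ∀ u v, (0:ℝ) ≤ min 1 (Real.exp (Φ u - Φ v)) :=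
    fun u v => le_min zero_le_one (Real.exp_nonneg _)
  have hF : Measurable fun p : U × U => min 1 (Real.exp (Φ p.1 - Φ p.2)) :=
    measurable_const.min (((hΦmeas.comp measurable_fst).sub (hΦmeas.comp measurable_snd)).exp)
  have hI : ∀ S : Set U, StronglyMeasurable fun u => ∫ v in S, min 1 (Real.exp (Φ u - Φ v)) ∂ρ :=
    fun S => StronglyMeasurable.integral_prod_right' (ν := ρ.restrict S) hF.stronglyMeasurable
  have hcm : StronglyMeasurable fun u => ∫ v, min 1 (Real.exp (Φ u - Φ v)) ∂ρ :=
    StronglyMeasurable.integral_prod_right' (ν := ρ) hF.stronglyMeasurable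
  have hIb : ∀ (S : Set U) u, ‖∫ v in S, min 1 (Real.exp (Φ u - Φ v)) ∂ρ‖ ≤ 1 := by
    intro S u
    refine (norm_integral_le_of_norm_le_const (C := 1) (ae_of_all _ fun v => ?_)).trans ?_
    · rw [Real.norm_eq_abs, abs_of_nonneg (hα0 u v)]; exact min_le_left _ _
    · rw [one_mul, Measure.real, Measure.restrict_apply_univ]
      exact ENNReal.toReal_le_of_le_ofReal zero_le_one (by simpa using prob_le_one (μ := ρ) (s := S))
  have hcb : ∀ u, ‖∫ v, min 1 (Real.exp (Φ u - Φ v)) ∂ρ‖ ≤ 1 := by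
    intro u
    refine (norm_integral_le_of_norm_le_const (C := 1) (ae_of_all _ fun v => ?_)).trans ?_
    · rw [Real.norm_eq_abs, abs_of_nonneg (hα0 u v)]; exact min_le_left _ _
    · simp
  have t1 : ∀ (S T : Set U), Integrable
      (fun u => (Real.exp (-Φ u) / Z) * ∫ v in T, min 1 (Real.exp (Φ u - Φ v)) ∂ρ)
      (ρ.restrict S) := by
    intro S T
    refine Integrable.mono' (integrable_const (1 / Z))
      (hgm.aestronglyMeasurable.mul (hI T).aestronglyMeasurable) (ae_of_all _ fun u => ?_)
    rw [norm_mul]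
    calc ‖Real.exp (-Φ u) / Z‖ * ‖∫ v in T, min 1 (Real.exp (Φ u - Φ v)) ∂ρ‖
        ≤ (1 / Z) * 1 := by
          refine mul_le_mul ?_ (hIb T u) (norm_nonneg _) hC0
          rw [Real.norm_eq_abs, abs_of_nonneg (hg0 u)]; exact hgC u
      _ = 1 / Z := mul_one _
  have t2 : ∀ (S T : Set U), MeasurableSet T → Integrable
      (fun u => (Real.exp (-Φ u) / Z) *
        ((1 - ∫ v, min 1 (Real.exp (Φ u - Φ v)) ∂ρ) * T.indicator (fun _ => (1:ℝ)) u))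
      (ρ.restrict S) := by
    intro S T hT
    refine Integrable.mono' (integrable_const ((1 / Z) * 2))
      (hgm.aestronglyMeasurable.mul (((stronglyMeasurable_const.sub hcm).measurable.mul
        (measurable_const.indicator hT)).aestronglyMeasurable)) (ae_of_all _ fun u => ?_)
    rw [norm_mul]
    refine mul_le_mul ?_ ?_ (norm_nonneg _) hC0
    · rw [Real.norm_eq_abs, abs_of_nonneg (hg0 u)]; exact hgC u
    · rw [norm_mul]
      have h1 : ‖1 - ∫ v, min 1 (Real.exp (Φ u - Φ v)) ∂ρ‖ ≤ 2 := by
        calc ‖1 - ∫ v, min 1 (Real.exp (Φ u - Φ v)) ∂ρ‖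
            ≤ ‖(1:ℝ)‖ + ‖∫ v, min 1 (Real.exp (Φ u - Φ v)) ∂ρ‖ := norm_sub_le _ _
          _ ≤ 1 + 1 := by simpa using hcb u
          _ = 2 := by norm_num
      have h2 : ‖T.indicator (fun _ => (1:ℝ)) u‖ ≤ 1 := by
        by_cases h : u ∈ T <;> simp [h]
      calc ‖1 - ∫ v, min 1 (Real.exp (Φ u - Φ v)) ∂ρ‖ * ‖T.indicator (fun _ => (1:ℝ)) u‖
          ≤ 2 * 1 := mul_le_mul h1 h2 (norm_nonneg _) (by norm_num)
        _ = 2 := mul_one _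
  -- pointwise rewriting of the first term
  have h1 : ∀ (T : Set U) u,
      (Real.exp (-Φ u) / Z) * ∫ v in T, min 1 (Real.exp (Φ u - Φ v)) ∂ρ
        = ∫ v in T, min (Real.exp (-Φ u)) (Real.exp (-Φ v)) / Z ∂ρ := by
    intro T u
    rw [← integral_const_mul]
    refine integral_congr_ae (ae_of_all _ fun v => ?_)
    beta_reduce
    rw [div_mul_eq_mul_div, key13]
  -- second term as an intersection integral
  have h2 : ∀ (S T : Set U), MeasurableSet T →
      ∫ u in S, (Real.exp (-Φ u) / Z) *
          ((1 - ∫ v, min 1 (Real.exp (Φ u - Φ v)) ∂ρ) * T.indicator (fun _ => (1:ℝ)) u) ∂ρ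
        = ∫ u in S ∩ T,
            (Real.exp (-Φ u) / Z) * (1 - ∫ v, min 1 (Real.exp (Φ u - Φ v)) ∂ρ) ∂ρ := by
    intro S T hT
    rw [← setIntegral_indicator hT]
    refine integral_congr_ae (ae_of_all _ fun u => ?_)
    by_cases h : u ∈ T <;> simp [Set.indicator_of_mem, Set.indicator_of_notMem, h]
  -- the double-integral swap
  have hswap : ∫ u in A, ∫ v in B, min (Real.exp (-Φ u)) (Real.exp (-Φ v)) / Z ∂ρ ∂ρ
      = ∫ v in B, ∫ u in A, min (Real.exp (-Φ u)) (Real.exp (-Φ v)) / Z ∂ρ ∂ρ := by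
    refine integral_integral_swap ?_
    refine Integrable.mono' (integrable_const (1 / Z)) ?_ (ae_of_all _ fun p => ?_)
    · exact ((((hΦmeas.comp measurable_fst).neg.exp).min
        ((hΦmeas.comp measurable_snd).neg.exp)).div_const Z).aestronglyMeasurable
    · simp only [Function.uncurry]
      rw [Real.norm_eq_abs, abs_of_nonneg (div_nonneg (le_min (Real.exp_nonneg _) (Real.exp_nonneg _)) hZ)]
      simp only [div_eq_mul_inv]
      exact mul_le_mul_of_nonneg_right
        ((min_le_left _ _).trans (Real.exp_le_one_iff.2 (neg_nonpos.2 (hΦ0 _))))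
        (inv_nonneg.2 hZ)
  calc ∫ u in A, (Real.exp (-Φ u) / Z) *
        ((∫ v in B, min 1 (Real.exp (Φ u - Φ v)) ∂ρ)
          + (1 - ∫ v, min 1 (Real.exp (Φ u - Φ v)) ∂ρ) * B.indicator (fun _ => (1:ℝ)) u) ∂ρ
      = ∫ u in A, ((Real.exp (-Φ u) / Z) * ∫ v in B, min 1 (Real.exp (Φ u - Φ v)) ∂ρ)
          + ((Real.exp (-Φ u) / Z) *
            ((1 - ∫ v, min 1 (Real.exp (Φ u - Φ v)) ∂ρ) * B.indicator (fun _ => (1:ℝ)) u)) ∂ρ := by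
        refine integral_congr_ae (ae_of_all _ fun u => ?_); ring
    _ = (∫ u in A, (Real.exp (-Φ u) / Z) * ∫ v in B, min 1 (Real.exp (Φ u - Φ v)) ∂ρ ∂ρ)
          + ∫ u in A, (Real.exp (-Φ u) / Z) *
            ((1 - ∫ v, min 1 (Real.exp (Φ u - Φ v)) ∂ρ) * B.indicator (fun _ => (1:ℝ)) u) ∂ρ :=
        integral_add (t1 A B) (t2 A B hB)
    _ = (∫ u in B, (Real.exp (-Φ u) / Z) * ∫ v in A, min 1 (Real.exp (Φ u - Φ v)) ∂ρ ∂ρ)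
          + ∫ u in B, (Real.exp (-Φ u) / Z) *
            ((1 - ∫ v, min 1 (Real.exp (Φ u - Φ v)) ∂ρ) * A.indicator (fun _ => (1:ℝ)) u) ∂ρ := by
        congr 1
        · calc ∫ u in A, (Real.exp (-Φ u) / Z) * ∫ v in B, min 1 (Real.exp (Φ u - Φ v)) ∂ρ ∂ρ
              = ∫ u in A, ∫ v in B, min (Real.exp (-Φ u)) (Real.exp (-Φ v)) / Z ∂ρ ∂ρ := by
                refine integral_congr_ae (ae_of_all _ fun u => ?_); exact h1 B u
            _ = ∫ v in B, ∫ u in A, min (Real.exp (-Φ u)) (Real.exp (-Φ v)) / Z ∂ρ ∂ρ := hswap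
            _ = ∫ u in B, ∫ v in A, min (Real.exp (-Φ u)) (Real.exp (-Φ v)) / Z ∂ρ ∂ρ := by
                refine integral_congr_ae (ae_of_all _ fun u => ?_)
                refine integral_congr_ae (ae_of_all _ fun v => ?_)
                beta_reduce
                rw [min_comm]
            _ = ∫ u in B, (Real.exp (-Φ u) / Z) * ∫ v in A, min 1 (Real.exp (Φ u - Φ v)) ∂ρ ∂ρ := by
                refine integral_congr_ae (ae_of_all _ fun u => ?_); exact (h1 A u).symm
        · rw [h2 A B hB, h2 B A hA, Set.inter_comm]
    _ = ∫ u in B, (Real.exp (-Φ u) / Z) *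
        ((∫ v in A, min 1 (Real.exp (Φ u - Φ v)) ∂ρ)
          + (1 - ∫ v, min 1 (Real.exp (Φ u - Φ v)) ∂ρ) * A.indicator (fun _ => (1:ℝ)) u) ∂ρ := by
        rw [← integral_add (t1 B A) (t2 B A hA)]
        refine integral_congr_ae (ae_of_all _ fun u => ?_); ring
end Aux

/-- the independence sampler is reversible with respect to the
posterior `π`, and in particular `π` is invariant for it. -/
theorem stmt13
    {U : Type*} [MeasurableSpace U]
    (ρ : Measure U) [IsProbabilityMeasure ρ]
    (Φstar : ℝ) (hΦstar : 0 ≤ Φstar)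
    (Φ : U → ℝ) (hΦmeas : Measurable Φ)
    (hΦ : ∀ u, 0 ≤ Φ u ∧ Φ u ≤ Φstar) :
    (∀ A B : Set U, MeasurableSet A → MeasurableSet B →
      ∫ u in A, indepKernel ρ Φ u B ∂(posterior ρ Φ)
        = ∫ u in B, indepKernel ρ Φ u A ∂(posterior ρ Φ)) ∧
    (∀ A : Set U, MeasurableSet A →
      ∫ u, indepKernel ρ Φ u A ∂(posterior ρ Φ)
        = ((posterior ρ Φ) A).toReal) := by
  have hZ0 : (0:ℝ) ≤ ∫ v, Real.exp (-Φ v) ∂ρ := integral_nonneg fun v => Real.exp_nonneg _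
  have hrev : ∀ A B : Set U, MeasurableSet A → MeasurableSet B →
      ∫ u in A, indepKernel ρ Φ u B ∂(posterior ρ Φ)
        = ∫ u in B, indepKernel ρ Φ u A ∂(posterior ρ Φ) := by
    intro A B hA hB
    rw [conv13 ρ Φ hΦmeas hA, conv13 ρ Φ hΦmeas hB]
    simp only [indepKernel]
    exact rev13 ρ Φ hΦmeas (fun u => (hΦ u).1) _ hZ0 hA hB
  refine ⟨hrev, fun A hA => ?_⟩
  have h := hrev Set.univ A MeasurableSet.univ hA
  rw [setIntegral_univ] at h
  rw [h]
  have hk : ∀ u, indepKernel ρ Φ u Set.univ = 1 := by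
    intro u
    simp only [indepKernel, Set.indicator_univ, setIntegral_univ]
    ring
  calc ∫ u in A, indepKernel ρ Φ u Set.univ ∂(posterior ρ Φ)
      = ∫ _ in A, (1:ℝ) ∂(posterior ρ Φ) :=
        integral_congr_ae (ae_of_all _ fun u => hk u)
    _ = ((posterior ρ Φ) A).toReal := by rw [setIntegral_const]; simp; rfl
end

section
/- Let (U,Θ) be a measurable space, κ a Markov (probability) transition kernel on U, ρ a probability measure on (U,Θ), and ε ∈ (0,1] such that κ(u, A) ≥ ε ρ(A) for every u ∈ U and every measurable A (Doeblin minorization). Let π be a probability measure invariant for κ, i.e. ∫_U κ(u, A) dπ(u) = π(A) for all measurable A. Then for every n ∈ ℕ and every u ∈ U, the n-step kernel κⁿ (defined by κ¹ = κ and κ^{n+1}(u, A) = ∫_U κ(v, A) κⁿ(u, dv)) satisfies ‖κⁿ(u, ·) − π‖_TV ≤ 2(1 − ε)ⁿ. -/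
open MeasureTheory ProbabilityTheory
open scoped ProbabilityTheory

open Set
open scoped ENNReal

lemma layer_key {U : Type*} [MeasurableSpace U]
    (μ ν : Measure U) (g : U → ℝ) (hg : Measurable g) (c : ℝ)
    (hg0 : ∀ x, 0 ≤ g x) (hgc : ∀ x, g x ≤ c) (D : ℝ≥0∞)
    (hD : ∀ A : Set U, MeasurableSet A → μ A ≤ ν A + D) :
    ∫⁻ x, ENNReal.ofReal (g x) ∂μ ≤ ∫⁻ x, ENNReal.ofReal (g x) ∂ν + ENNReal.ofReal c * D := by
  rw [lintegral_eq_lintegral_meas_lt μ (Filter.Eventually.of_forall hg0) hg.aemeasurable,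
      lintegral_eq_lintegral_meas_lt ν (Filter.Eventually.of_forall hg0) hg.aemeasurable]
  calc ∫⁻ t in Ioi (0:ℝ), μ {a | t < g a}
      ≤ ∫⁻ t in Ioi (0:ℝ), (ν {a | t < g a} + (Ioo (0:ℝ) c).indicator (fun _ => D) t) := by
        apply setLIntegral_mono' measurableSet_Ioi
        intro t ht
        by_cases htc : t < c
        · have hi : (Ioo (0:ℝ) c).indicator (fun _ => D) t = D :=
            Set.indicator_of_mem (Set.mem_Ioo.mpr ⟨ht, htc⟩) _
          rw [hi]
          exact hD _ (measurableSet_lt measurable_const hg)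
        · have he : {a | t < g a} = ∅ := by
            ext a
            simp only [Set.mem_setOf_eq, Set.mem_empty_iff_false, iff_false, not_lt]
            exact (hgc a).trans (not_lt.mp htc)
          rw [he]; simp
    _ ≤ _ := by
        rw [lintegral_add_right _ (measurable_const.indicator measurableSet_Ioo)]
        gcongr
        rw [lintegral_indicator measurableSet_Ioo]
        simp [Measure.restrict_apply, measurableSet_Ioo,
          Set.inter_eq_left.mpr (Set.Ioo_subset_Ioi_self), Real.volume_Ioo, mul_comm]

lemma abs_toReal_sub_le {a b d : ℝ≥0∞} (ha : a ≠ ⊤) (hb : b ≠ ⊤) (hd : d ≠ ⊤)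
    (h1 : a ≤ b + d) (h2 : b ≤ a + d) : |a.toReal - b.toReal| ≤ d.toReal := by
  rw [abs_sub_le_iff]
  constructor
  · have := ENNReal.toReal_mono (by finiteness) h1
    rw [ENNReal.toReal_add hb hd] at this
    linarith
  · have := ENNReal.toReal_mono (by finiteness) h2
    rw [ENNReal.toReal_add ha hd] at this
    linarith

lemma le_add_ofReal_of_abs {a b : ℝ≥0∞} {d : ℝ} (ha : a ≠ ⊤) (hb : b ≠ ⊤)
    (h : |a.toReal - b.toReal| ≤ d) : a ≤ b + ENNReal.ofReal d := by
  have h1 : a.toReal ≤ b.toReal + d := by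
    have := abs_le.mp h
    linarith [this.2]
  calc a = ENNReal.ofReal a.toReal := (ENNReal.ofReal_toReal ha).symm
    _ ≤ ENNReal.ofReal (b.toReal + d) := ENNReal.ofReal_le_ofReal h1
    _ ≤ ENNReal.ofReal b.toReal + ENNReal.ofReal d := ENNReal.ofReal_add_le
    _ = b + ENNReal.ofReal d := by rw [ENNReal.ofReal_toReal hb]

/-- The `n`-step transition kernel: `kiter κ 0 = id` (the trivial `0`-step
kernel), `kiter κ 1 = κ`, and
`kiter κ (n+1) (u, A) = ∫ κ(v, A) (kiter κ n)(u, dv)`. -/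
noncomputable def kiter {U : Type*} [MeasurableSpace U]
    (κ : Kernel U U) : ℕ → Kernel U U
  | 0 => Kernel.id
  | n + 1 => κ ∘ₖ kiter κ n

lemma kiter_markov {U : Type*} [MeasurableSpace U] (κ : Kernel U U) [IsMarkovKernel κ]
    (n : ℕ) : IsMarkovKernel (kiter κ n) := by
  induction n with
  | zero => exact inferInstanceAs (IsMarkovKernel (Kernel.id : Kernel U U))
  | succ n ih =>
    haveI := ih
    exact inferInstanceAs (IsMarkovKernel (κ ∘ₖ kiter κ n))

/-- geometric ergodicity under a Doeblin minorization condition: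
if `κ(u, ·) ≥ ε ρ` for all `u` and `π` is invariant for `κ`, then
`‖κⁿ(u, ·) − π‖_TV ≤ 2 (1 − ε)ⁿ`, i.e. `|κⁿ(u, A) − π(A)| ≤ (1 − ε)ⁿ` for
every measurable `A`. -/
theorem stmt14
    {U : Type*} [MeasurableSpace U]
    (κ : Kernel U U) [IsMarkovKernel κ]
    (ρ : Measure U) [IsProbabilityMeasure ρ]
    (ε : ℝ) (hε0 : 0 < ε) (hε1 : ε ≤ 1)
    (hminor : ∀ u : U, ∀ A : Set U, MeasurableSet A →
      ENNReal.ofReal ε * ρ A ≤ κ u A)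
    (π : Measure U) [IsProbabilityMeasure π]
    (hinv : ∀ A : Set U, MeasurableSet A → ∫⁻ u, κ u A ∂π = π A) :
    ∀ n : ℕ, 1 ≤ n → ∀ u : U, ∀ A : Set U, MeasurableSet A →
      |(kiter κ n u A).toReal - (π A).toReal| ≤ (1 - ε) ^ n := by
  have hε1' : (0:ℝ) ≤ 1 - ε := by linarith
  -- the split: ofReal (g v) + ε ρ A = κ v A, with 0 ≤ g v ≤ 1 - ε
  have key : ∀ n : ℕ, ∀ u : U, ∀ A : Set U, MeasurableSet A →
      |(kiter κ n u A).toReal - (π A).toReal| ≤ (1 - ε) ^ n := by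
    intro n
    induction n with
    | zero =>
      intro u A hA
      haveI := kiter_markov κ 0
      have h1 : kiter κ 0 u A ≤ 1 := prob_le_one
      have h2 : π A ≤ 1 := prob_le_one
      have t1 : (kiter κ 0 u A).toReal ≤ 1 := by
        simpa using ENNReal.toReal_mono (by simp) h1
      have t2 : (π A).toReal ≤ 1 := by
        simpa using ENNReal.toReal_mono (by simp) h2
      have t3 : 0 ≤ (kiter κ 0 u A).toReal := ENNReal.toReal_nonneg
      have t4 : 0 ≤ (π A).toReal := ENNReal.toReal_nonneg
      simp only [pow_zero]
      rw [abs_sub_le_iff]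
      constructor <;> linarith
    | succ n ih =>
      intro u A hA
      haveI := kiter_markov κ n
      set μ : Measure U := kiter κ n u with hμ
      haveI : IsProbabilityMeasure μ := by exact IsMarkovKernel.isProbabilityMeasure u
      -- upper bound for κ v A
      have hub : ∀ v, κ v A ≤ ENNReal.ofReal (1 - ε) + ENNReal.ofReal ε * ρ A := by
        intro v
        have hc : κ v A + ENNReal.ofReal ε * ρ Aᶜ ≤
            (ENNReal.ofReal (1 - ε) + ENNReal.ofReal ε * ρ A) + ENNReal.ofReal ε * ρ Aᶜ := by
          calc κ v A + ENNReal.ofReal ε * ρ Aᶜ ≤ κ v A + κ v Aᶜ := by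
                gcongr
                exact hminor v Aᶜ hA.compl
            _ = 1 := by
                rw [measure_add_measure_compl hA]
                simp
            _ = ENNReal.ofReal (1 - ε) + ENNReal.ofReal ε := by
                rw [← ENNReal.ofReal_add hε1' hε0.le]
                norm_num
            _ = (ENNReal.ofReal (1 - ε) + ENNReal.ofReal ε * ρ A) + ENNReal.ofReal ε * ρ Aᶜ := by
                rw [add_assoc, ← mul_add, measure_add_measure_compl hA]
                simp
        exact (ENNReal.add_le_add_iff_right (by finiteness)).mp hc
      -- the function g
      set g : U → ℝ := fun v => (κ v A).toReal - ε * (ρ A).toReal with hg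
      have hgm : Measurable g := ((κ.measurable_coe hA).ennreal_toReal).sub measurable_const
      have hερA : (ENNReal.ofReal ε * ρ A).toReal = ε * (ρ A).toReal := by
        rw [ENNReal.toReal_mul, ENNReal.toReal_ofReal hε0.le]
      have hg0 : ∀ v, 0 ≤ g v := by
        intro v
        have := ENNReal.toReal_mono (measure_ne_top _ _) (hminor v A hA)
        rw [hερA] at this
        simp only [hg, sub_nonneg]
        exact this
      have hgc : ∀ v, g v ≤ 1 - ε := by
        intro v
        have := ENNReal.toReal_mono (by finiteness) (hub v)
        rw [ENNReal.toReal_add (by finiteness) (by finiteness), ENNReal.toReal_ofReal hε1',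
          hερA] at this
        simp only [hg]
        linarith
      have hsplit : ∀ v, ENNReal.ofReal (g v) + ENNReal.ofReal ε * ρ A = κ v A := by
        intro v
        have h1 : ENNReal.ofReal (g v) = κ v A - ENNReal.ofReal ε * ρ A := by
          rw [hg]
          rw [ENNReal.ofReal_sub _ (by positivity), ENNReal.ofReal_toReal (measure_ne_top _ _),
            ← hερA, ENNReal.ofReal_toReal (by finiteness)]
        rw [h1, tsub_add_cancel_of_le (hminor v A hA)]
      -- integral identities
      have hint : ∀ (ν : Measure U) [IsProbabilityMeasure ν],
          ∫⁻ v, κ v A ∂ν = ∫⁻ v, ENNReal.ofReal (g v) ∂ν + ENNReal.ofReal ε * ρ A := by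
        intro ν _
        calc ∫⁻ v, κ v A ∂ν = ∫⁻ v, (ENNReal.ofReal (g v) + ENNReal.ofReal ε * ρ A) ∂ν := by
              exact lintegral_congr fun v => (hsplit v).symm
          _ = ∫⁻ v, ENNReal.ofReal (g v) ∂ν + ENNReal.ofReal ε * ρ A := by
              rw [lintegral_add_right _ measurable_const, lintegral_const]
              simp
      have hXn : kiter κ (n+1) u A = ∫⁻ v, κ v A ∂μ := by
        show (κ ∘ₖ kiter κ n) u A = _
        rw [Kernel.comp_apply' _ _ _ hA]
      have hπA : π A = ∫⁻ v, κ v A ∂π := (hinv A hA).symm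
      -- apply the layer-cake contraction
      set D : ℝ≥0∞ := ENNReal.ofReal ((1 - ε) ^ n) with hD
      have hD1 : ∀ B : Set U, MeasurableSet B → μ B ≤ π B + D := by
        intro B hB
        exact le_add_ofReal_of_abs (measure_ne_top _ _) (measure_ne_top _ _) (ih u B hB)
      have hD2 : ∀ B : Set U, MeasurableSet B → π B ≤ μ B + D := by
        intro B hB
        refine le_add_ofReal_of_abs (measure_ne_top _ _) (measure_ne_top _ _) ?_
        rw [abs_sub_comm]
        exact ih u B hB
      have k1 := layer_key μ π g hgm (1 - ε) hg0 hgc D hD1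
      have k2 := layer_key π μ g hgm (1 - ε) hg0 hgc D hD2
      set Iμ := ∫⁻ v, ENNReal.ofReal (g v) ∂μ with hIμ
      set Iπ := ∫⁻ v, ENNReal.ofReal (g v) ∂π with hIπ
      have hIbd : ∀ (ν : Measure U) [IsProbabilityMeasure ν],
          ∫⁻ v, ENNReal.ofReal (g v) ∂ν ≠ ⊤ := by
        intro ν _
        refine ne_top_of_le_ne_top ((ENNReal.ofReal_ne_top : ENNReal.ofReal (1 - ε) ≠ ⊤)) ?_
        calc ∫⁻ v, ENNReal.ofReal (g v) ∂ν ≤ ∫⁻ _, ENNReal.ofReal (1 - ε) ∂ν :=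
              lintegral_mono fun v => ENNReal.ofReal_le_ofReal (hgc v)
          _ = ENNReal.ofReal (1 - ε) := by rw [lintegral_const]; simp
      have hIμt : Iμ ≠ ⊤ := hIbd μ
      have hIπt : Iπ ≠ ⊤ := hIbd π
      have habs : |Iμ.toReal - Iπ.toReal| ≤ (ENNReal.ofReal (1 - ε) * D).toReal :=
        abs_toReal_sub_le hIμt hIπt (by finiteness) k1 k2
      have hDt : (ENNReal.ofReal (1 - ε) * D).toReal = (1 - ε) ^ (n + 1) := by
        rw [ENNReal.toReal_mul, ENNReal.toReal_ofReal hε1', hD,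
          ENNReal.toReal_ofReal (by positivity)]
        ring
      rw [hXn, hint μ, hπA, hint π]
      rw [ENNReal.toReal_add hIμt (by finiteness), ENNReal.toReal_add hIπt (by finiteness)]
      have : Iμ.toReal + (ENNReal.ofReal ε * ρ A).toReal - (Iπ.toReal + (ENNReal.ofReal ε * ρ A).toReal) = Iμ.toReal - Iπ.toReal := by ring
      rw [this]
      rw [hDt] at habs
      exact habs
  intro n _ u A hA
  exact key n u A hA
end

section
/- Let (U,Θ) be a measurable space, κ a Markov transition kernel on U, ρ a probability measure, and ε ∈ (0,1] with κ(u, A) ≥ ε ρ(A) for all u ∈ U and measurable A. Let π be a probability measure invariant for κ, and let (X_k)_{k≥0} be the canonical Markov chain on U^ℕ with initial distribution π and transition kernel κ (its law being the Ionescu–Tulcea measure). Then for every bounded measurable g : U → ℝ with ∫_U g dπ = 0 and every M ∈ ℕ, E[ |∑_{k=1}^M g(X_k)|² ] ≤ C M (sup_{u∈U} |g(u)|)², where C = 1 + 4/ε (in particular C depends only on ε). -/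
open MeasureTheory ProbabilityTheory

open scoped ENNReal

namespace Stmt15Aux

variable {α : Type*} [MeasurableSpace α]

lemma integrable_of_bound (μ : Measure α) [IsFiniteMeasure μ] {f : α → ℝ}
    (hf : AEStronglyMeasurable f μ) (B : ℝ) (hB : ∀ x, |f x| ≤ B) : Integrable f μ :=
  Integrable.mono' (integrable_const B) hf
    (Filter.Eventually.of_forall fun x => by simpa [Real.norm_eq_abs] using hB x)

lemma abs_integral_le (μ : Measure α) [IsProbabilityMeasure μ] {f : α → ℝ} {B : ℝ}
    (hb : ∀ x, |f x| ≤ B) : |∫ x, f x ∂μ| ≤ B := by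
  calc |∫ x, f x ∂μ| = ‖∫ x, f x ∂μ‖ := (Real.norm_eq_abs _).symm
    _ ≤ B * (μ Set.univ).toReal := norm_integral_le_of_norm_le_const
        (Filter.Eventually.of_forall fun x => by simpa [Real.norm_eq_abs] using hb x)
    _ = B := by simp

/-- iterated kernel -/
noncomputable def kpow (κ : Kernel α α) : ℕ → Kernel α α
  | 0 => Kernel.id
  | n + 1 => κ ∘ₖ kpow κ n

instance (κ : Kernel α α) [IsMarkovKernel κ] (n : ℕ) : IsMarkovKernel (kpow κ n) := by
  induction n with
  | zero => exact (inferInstance : IsMarkovKernel Kernel.id)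
  | succ n ih => rw [kpow]; infer_instance

lemma kpow_succ' (κ : Kernel α α) [IsMarkovKernel κ] (n : ℕ) :
    kpow κ (n + 1) = kpow κ n ∘ₖ κ := by
  induction n with
  | zero => show κ ∘ₖ Kernel.id = Kernel.id ∘ₖ κ; rw [Kernel.comp_id, Kernel.id_comp]
  | succ n ih =>
      show κ ∘ₖ kpow κ (n + 1) = kpow κ (n + 1) ∘ₖ κ
      rw [ih, ← Kernel.comp_assoc, ← ih]
      rfl

lemma bind_eq_map_snd (μ : Measure α) [SFinite μ] (η : Kernel α α) [IsSFiniteKernel η] :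
    μ.bind η = (μ ⊗ₘ η).map Prod.snd := by
  ext s hs
  rw [Measure.map_apply measurable_snd hs, Measure.bind_apply hs η.measurable.aemeasurable,
    Measure.compProd_apply (measurable_snd hs)]
  rfl

lemma integral_bind_of_bounded (μ : Measure α) [IsProbabilityMeasure μ] (η : Kernel α α)
    [IsMarkovKernel η] {g : α → ℝ} (hg : Measurable g) {B : ℝ} (hB : ∀ v, |g v| ≤ B) :
    ∫ v, g v ∂(μ.bind η) = ∫ u, ∫ v, g v ∂(η u) ∂μ := by
  haveI : IsProbabilityMeasure (μ ⊗ₘ η) :=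
    ⟨by rw [Measure.compProd_apply_univ]; exact measure_univ⟩
  rw [bind_eq_map_snd μ η,
    integral_map measurable_snd.aemeasurable hg.aestronglyMeasurable]
  exact Measure.integral_compProd
    (integrable_of_bound _ (hg.comp measurable_snd).aestronglyMeasurable B fun p => hB p.2)

lemma geom_bound {r : ℝ} (hr0 : 0 ≤ r) (hr1 : r < 1) (n : ℕ) :
    ∑ i ∈ Finset.range n, r ^ i ≤ 1 / (1 - r) := by
  have h1 : r ≠ 1 := ne_of_lt hr1
  rw [geom_sum_eq h1 n]
  have h3 : (0:ℝ) < 1 - r := by linarith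
  have h4 : (r ^ n - 1) / (r - 1) = (1 - r ^ n) / (1 - r) := by
    rw [div_eq_div_iff (by linarith) (by linarith)]; ring
  rw [h4]
  have : 0 ≤ r ^ n := pow_nonneg hr0 n
  gcongr
  linarith

lemma doeblin_step (κ : Kernel α α) [IsMarkovKernel κ] (ρ : Measure α)
    [IsProbabilityMeasure ρ] (ε : ℝ) (hε0 : 0 < ε) (hε1 : ε ≤ 1)
    (hminor : ∀ u : α, ∀ A : Set α, MeasurableSet A → ENNReal.ofReal ε * ρ A ≤ κ u A)
    {h : α → ℝ} (hh : Measurable h) {B : ℝ} (hB : ∀ v, |h v| ≤ B) (u : α) :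
    |(∫ v, h v ∂(κ u)) - ε * ∫ v, h v ∂ρ| ≤ (1 - ε) * B := by
  set e : ℝ≥0∞ := ENNReal.ofReal ε with he
  have heu : e ≤ 1 := ENNReal.ofReal_le_one.mpr hε1
  have hetop : e ≠ ⊤ := ENNReal.ofReal_ne_top
  have hle : e • ρ ≤ κ u := Measure.le_iff.mpr fun A hA => by
    simpa [Measure.smul_apply, smul_eq_mul] using hminor u A hA
  set ν : Measure α := κ u - e • ρ with hν
  haveI : IsFiniteMeasure (e • ρ) := ⟨by
    simp only [Measure.smul_apply, measure_univ, smul_eq_mul, mul_one]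
    exact hetop.lt_top⟩
  have hsum : ν + e • ρ = κ u := Measure.sub_add_cancel_of_le hle
  have hintν : Integrable h ν :=
    integrable_of_bound _ hh.aestronglyMeasurable B hB
  have hintρ : Integrable h (e • ρ) :=
    integrable_of_bound _ hh.aestronglyMeasurable B hB
  have h1 : ∫ v, h v ∂(κ u) = ∫ v, h v ∂ν + ∫ v, h v ∂(e • ρ) := by
    rw [← hsum, integral_add_measure hintν hintρ]
  have h2 : ∫ v, h v ∂(e • ρ) = ε * ∫ v, h v ∂ρ := by
    rw [integral_smul_measure, he, ENNReal.toReal_ofReal hε0.le, smul_eq_mul]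
  have hνuniv : (ν Set.univ).toReal = 1 - ε := by
    rw [hν, Measure.sub_apply MeasurableSet.univ hle]
    simp only [Measure.smul_apply, measure_univ, smul_eq_mul, mul_one]
    rw [ENNReal.toReal_sub_of_le heu (by simp), ENNReal.toReal_one, he,
      ENNReal.toReal_ofReal hε0.le]
  calc |(∫ v, h v ∂(κ u)) - ε * ∫ v, h v ∂ρ| = ‖∫ v, h v ∂ν‖ := by
        rw [h1, h2, Real.norm_eq_abs]; ring_nf
    _ ≤ B * (ν Set.univ).toReal := norm_integral_le_of_norm_le_const
        (Filter.Eventually.of_forall fun x => by simpa [Real.norm_eq_abs] using hB x)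
    _ = (1 - ε) * B := by rw [hνuniv, mul_comm]

lemma contraction (κ : Kernel α α) [IsMarkovKernel κ] (ρ : Measure α)
    [IsProbabilityMeasure ρ] (ε : ℝ) (hε0 : 0 < ε) (hε1 : ε ≤ 1)
    (hminor : ∀ u : α, ∀ A : Set α, MeasurableSet A → ENNReal.ofReal ε * ρ A ≤ κ u A)
    {g : α → ℝ} (hg : Measurable g) {Bg : ℝ} (hBg : ∀ u, |g u| ≤ Bg) (n : ℕ) :
    ∃ c : ℝ, ∀ u, |(∫ v, g v ∂(kpow κ n u)) - c| ≤ (1 - ε) ^ n * Bg := by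
  induction n with
  | zero =>
      refine ⟨0, fun u => ?_⟩
      rw [show kpow κ 0 = Kernel.id from rfl, Kernel.id_apply,
        integral_dirac' g u hg.stronglyMeasurable]
      simpa using hBg u
  | succ n ih =>
      obtain ⟨c, hc⟩ := ih
      set F : α → ℝ := fun u => ∫ v, g v ∂(kpow κ n u) with hFdef
      have hFmeas : Measurable F := by
        have : StronglyMeasurable fun u => ∫ v, g v ∂(kpow κ n u) :=
          MeasureTheory.StronglyMeasurable.integral_kernel_prod_right
            (f := fun _ v => g v) (hg.stronglyMeasurable.comp_measurable measurable_snd)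
        exact this.measurable
      set h : α → ℝ := fun v => F v - c with hhdef
      have hhmeas : Measurable h := hFmeas.sub measurable_const
      have hhB : ∀ v, |h v| ≤ (1 - ε) ^ n * Bg := hc
      refine ⟨c + ε * ∫ v, h v ∂ρ, fun u => ?_⟩
      have hrec : ∫ v, g v ∂(kpow κ (n + 1) u) = ∫ w, F w ∂(κ u) := by
        rw [kpow_succ', Kernel.comp_apply,
          integral_bind_of_bounded (κ u) (kpow κ n) hg hBg]
      have hFh : ∫ w, F w ∂(κ u) = (∫ w, h w ∂(κ u)) + c := by
        have hint : Integrable h (κ u) :=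
          integrable_of_bound _ hhmeas.aestronglyMeasurable _ hhB
        have : ∀ w, F w = h w + c := fun w => by simp [hhdef]
        calc ∫ w, F w ∂(κ u) = ∫ w, (h w + c) ∂(κ u) := by simp_rw [this]
          _ = (∫ w, h w ∂(κ u)) + c := by
              rw [integral_add hint (integrable_const c), integral_const]; simp
      rw [hrec, hFh]
      have hstep := doeblin_step κ ρ ε hε0 hε1 hminor hhmeas hhB u
      calc |(∫ w, h w ∂(κ u)) + c - (c + ε * ∫ v, h v ∂ρ)|
          = |(∫ w, h w ∂(κ u)) - ε * ∫ v, h v ∂ρ| := by ring_nf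
        _ ≤ (1 - ε) * ((1 - ε) ^ n * Bg) := hstep
        _ = (1 - ε) ^ (n + 1) * Bg := by ring

lemma sum_dist_le {ε : ℝ} (hε0 : 0 < ε) (hε1 : ε ≤ 1) (M k : ℕ) :
    ∑ l ∈ Finset.Icc 1 M, (1 - ε) ^ (Nat.dist k l) ≤ 2 / ε := by
  set r : ℝ := 1 - ε with hr
  have hr0 : 0 ≤ r := by linarith
  have hr1 : r < 1 := by linarith
  have h1r : 1 - r = ε := by rw [hr]; ring
  have key : ∀ s : Finset ℕ, Set.InjOn (Nat.dist k) s →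
      ∑ l ∈ s, r ^ Nat.dist k l ≤ 1 / ε := by
    intro s hinj
    have h1 : ∑ l ∈ s, r ^ Nat.dist k l = ∑ j ∈ s.image (Nat.dist k), r ^ j :=
      (Finset.sum_image fun x hx y hy hxy =>
        hinj (Finset.mem_coe.mpr hx) (Finset.mem_coe.mpr hy) hxy).symm
    rw [h1]
    have h2 : s.image (Nat.dist k) ⊆ Finset.range ((s.image (Nat.dist k)).sup id + 1) :=
      fun j hj => Finset.mem_range.mpr (Nat.lt_succ_of_le (Finset.le_sup (f := id) hj))
    calc ∑ j ∈ s.image (Nat.dist k), r ^ j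
        ≤ ∑ j ∈ Finset.range ((s.image (Nat.dist k)).sup id + 1), r ^ j :=
          Finset.sum_le_sum_of_subset_of_nonneg h2 fun j _ _ => pow_nonneg hr0 j
      _ ≤ 1 / (1 - r) := geom_bound hr0 hr1 _
      _ = 1 / ε := by rw [h1r]
  have hsplit := Finset.sum_filter_add_sum_filter_not (Finset.Icc 1 M) (· ≤ k)
    (fun l => r ^ Nat.dist k l)
  have hA : ∑ l ∈ (Finset.Icc 1 M).filter (· ≤ k), r ^ Nat.dist k l ≤ 1 / ε := by
    refine key _ fun a ha b hb hab => ?_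
    simp only [Finset.coe_filter, Set.mem_setOf_eq, Finset.mem_Icc] at ha hb
    simp only [Nat.dist] at hab
    omega
  have hB : ∑ l ∈ (Finset.Icc 1 M).filter (fun l => ¬ l ≤ k), r ^ Nat.dist k l ≤ 1 / ε := by
    refine key _ fun a ha b hb hab => ?_
    simp only [Finset.coe_filter, Set.mem_setOf_eq, Finset.mem_Icc] at ha hb
    simp only [Nat.dist] at hab
    omega
  calc ∑ l ∈ Finset.Icc 1 M, r ^ Nat.dist k l
      = ∑ l ∈ (Finset.Icc 1 M).filter (· ≤ k), r ^ Nat.dist k l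
        + ∑ l ∈ (Finset.Icc 1 M).filter (fun l => ¬ l ≤ k), r ^ Nat.dist k l := hsplit.symm
    _ ≤ 1 / ε + 1 / ε := add_le_add hA hB
    _ = 2 / ε := by ring

section Chain

variable {U : Type*} [MeasurableSpace U] {Ω : Type*} [MeasurableSpace Ω]
  (κ : Kernel U U) [IsMarkovKernel κ] (π : Measure U) [IsProbabilityMeasure π]
  (P : Measure Ω) [IsProbabilityMeasure P] (X : ℕ → Ω → U)

omit [IsMarkovKernel κ] [IsProbabilityMeasure π] [IsProbabilityMeasure P] in
lemma law_eq (hXmeas : ∀ k, Measurable (X k))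
    (hinit : P.map (X 0) = π)
    (hinv : ∀ A : Set U, MeasurableSet A → ∫⁻ u, κ u A ∂π = π A)
    (hMarkov : ∀ (k : ℕ) (A : Set U), MeasurableSet A →
      ∀ B : Set Ω,
        MeasurableSet[⨆ i ∈ Finset.range (k + 1),
          MeasurableSpace.comap (X i) inferInstance] B →
        ∫⁻ ω in B, κ (X k ω) A ∂P = P (B ∩ X (k + 1) ⁻¹' A)) :
    ∀ k, P.map (X k) = π := by
  intro k
  induction k with
  | zero => exact hinit
  | succ k ih =>
      apply Measure.ext
      intro A hA
      have hM := hMarkov k A hA Set.univ MeasurableSet.univ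
      rw [Measure.restrict_univ, Set.univ_inter] at hM
      rw [Measure.map_apply (hXmeas _) hA, ← hM,
        show (∫⁻ ω, κ (X k ω) A ∂P) = ∫⁻ u, κ u A ∂(P.map (X k)) from
          (lintegral_map (κ.measurable_coe hA) (hXmeas k)).symm, ih, hinv A hA]

lemma joint_law (hXmeas : ∀ k, Measurable (X k))
    (hinit : P.map (X 0) = π)
    (hinv : ∀ A : Set U, MeasurableSet A → ∫⁻ u, κ u A ∂π = π A)
    (hMarkov : ∀ (k : ℕ) (A : Set U), MeasurableSet A →
      ∀ B : Set Ω,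
        MeasurableSet[⨆ i ∈ Finset.range (k + 1),
          MeasurableSpace.comap (X i) inferInstance] B →
        ∫⁻ ω in B, κ (X k ω) A ∂P = P (B ∩ X (k + 1) ⁻¹' A)) :
    ∀ k n, P.map (fun ω => (X k ω, X (k + n) ω)) = π ⊗ₘ kpow κ n := by
  have hlaw := law_eq κ π P X hXmeas hinit hinv hMarkov
  intro k n
  induction n with
  | zero =>
      haveI : IsProbabilityMeasure (P.map fun ω => (X k ω, X k ω)) :=
        Measure.isProbabilityMeasure_map ((hXmeas k).prodMk (hXmeas k)).aemeasurable
      haveI : IsProbabilityMeasure (π ⊗ₘ kpow κ 0) :=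
        ⟨by rw [Measure.compProd_apply_univ]; exact measure_univ⟩
      refine MeasureTheory.ext_of_generate_finite _ generateFrom_prod.symm isPiSystem_prod
        ?_ (by simp [measure_univ])
      rintro s ⟨A, hA, A', hA', rfl⟩
      simp only [Nat.add_zero]
      rw [Measure.map_apply ((hXmeas k).prodMk (hXmeas k)) (hA.prod hA')]
      have hpre : (fun ω => (X k ω, X k ω)) ⁻¹' (A ×ˢ A') = X k ⁻¹' (A ∩ A') := by
        ext ω; simp [Set.mem_prod]
      have hRHS : ∫⁻ u in A, kpow κ 0 u A' ∂π = π (A' ∩ A) := by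
        simp_rw [show kpow κ 0 = Kernel.id from rfl, Kernel.id_apply,
          Measure.dirac_apply' _ hA']
        rw [lintegral_indicator_one hA', Measure.restrict_apply hA']
      rw [hpre, ← Measure.map_apply (hXmeas k) (hA.inter hA'), hlaw k,
        Measure.compProd_apply_prod hA hA', hRHS, Set.inter_comm]
  | succ n ih =>
      have hpair : Measurable fun ω => (X k ω, X (k + n) ω) :=
        (hXmeas k).prodMk (hXmeas (k + n))
      haveI : IsProbabilityMeasure (P.map fun ω => (X k ω, X (k + (n + 1)) ω)) :=
        Measure.isProbabilityMeasure_map ((hXmeas k).prodMk (hXmeas (k + (n + 1)))).aemeasurable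
      haveI : IsProbabilityMeasure (π ⊗ₘ kpow κ (n + 1)) :=
        ⟨by rw [Measure.compProd_apply_univ]; exact measure_univ⟩
      refine MeasureTheory.ext_of_generate_finite _ generateFrom_prod.symm isPiSystem_prod
        ?_ (by simp [measure_univ])
      rintro s ⟨A, hA, A', hA', rfl⟩
      have hBmeas : MeasurableSet[⨆ i ∈ Finset.range (k + n + 1),
          MeasurableSpace.comap (X i) inferInstance] (X k ⁻¹' A) := by
        have hle : MeasurableSpace.comap (X k) inferInstance ≤
            ⨆ i ∈ Finset.range (k + n + 1), MeasurableSpace.comap (X i) inferInstance := by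
          refine le_iSup₂ (f := fun i (_ : i ∈ Finset.range (k + n + 1)) =>
            MeasurableSpace.comap (X i) inferInstance) k ?_
          exact Finset.mem_range.mpr (by omega)
        exact hle _ ⟨A, hA, rfl⟩
      have hM := hMarkov (k + n) A' hA' (X k ⁻¹' A) hBmeas
      have hGmeas : Measurable fun p : U × U => (A ×ˢ (Set.univ : Set U)).indicator
          (fun q : U × U => κ q.2 A') p :=
        Measurable.indicator ((κ.measurable_coe hA').comp measurable_snd)
          (hA.prod MeasurableSet.univ)
      have step1 : ∫⁻ ω in X k ⁻¹' A, κ (X (k + n) ω) A' ∂P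
          = ∫⁻ ω, (A ×ˢ (Set.univ : Set U)).indicator (fun q : U × U => κ q.2 A')
              (X k ω, X (k + n) ω) ∂P := by
        rw [← lintegral_indicator ((hXmeas k) hA)]
        congr 1
        funext ω
        classical
        by_cases hω : X k ω ∈ A <;> simp [Set.indicator, hω]
      have step2 : ∫⁻ ω, (A ×ˢ (Set.univ : Set U)).indicator (fun q : U × U => κ q.2 A')
              (X k ω, X (k + n) ω) ∂P
          = ∫⁻ p, (A ×ˢ (Set.univ : Set U)).indicator (fun q : U × U => κ q.2 A') p
              ∂(π ⊗ₘ kpow κ n) := by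
        rw [← ih, lintegral_map hGmeas hpair]
      have step3 : ∫⁻ p, (A ×ˢ (Set.univ : Set U)).indicator (fun q : U × U => κ q.2 A') p
              ∂(π ⊗ₘ kpow κ n)
          = ∫⁻ u in A, kpow κ (n + 1) u A' ∂π := by
        rw [Measure.lintegral_compProd hGmeas, ← lintegral_indicator hA]
        congr 1
        funext u
        classical
        by_cases hu : u ∈ A
        · have : ∀ v, (A ×ˢ (Set.univ : Set U)).indicator
              (fun q : U × U => κ q.2 A') (u, v) = κ v A' := fun v => by
            simp [Set.indicator, hu]
          simp_rw [this]
          rw [Set.indicator_of_mem hu, show kpow κ (n + 1) = κ ∘ₖ kpow κ n from rfl,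
            Kernel.comp_apply' _ _ _ hA']
        · have : ∀ v, (A ×ˢ (Set.univ : Set U)).indicator
              (fun q : U × U => κ q.2 A') (u, v) = 0 := fun v => by
            simp [Set.indicator, hu]
          simp_rw [this]
          rw [Set.indicator_of_notMem hu]
          simp
      rw [Measure.map_apply ((hXmeas k).prodMk (hXmeas (k + (n + 1)))) (hA.prod hA'),
        Measure.compProd_apply_prod hA hA']
      have hpre : (fun ω => (X k ω, X (k + (n + 1)) ω)) ⁻¹' (A ×ˢ A')
          = X k ⁻¹' A ∩ X (k + n + 1) ⁻¹' A' := by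
        ext ω; simp [Set.mem_prod, Nat.add_assoc]
      rw [hpre, ← hM, step1, step2, step3]

end Chain

lemma kpow_inv {U : Type*} [MeasurableSpace U] (κ : Kernel U U) [IsMarkovKernel κ]
    (π : Measure U) [IsProbabilityMeasure π]
    (hinv : ∀ A : Set U, MeasurableSet A → ∫⁻ u, κ u A ∂π = π A) :
    ∀ n (A : Set U), MeasurableSet A → ∫⁻ u, kpow κ n u A ∂π = π A := by
  have hbind : π.bind κ = π := Measure.ext fun A hA => by
    rw [Measure.bind_apply hA (Kernel.measurable κ).aemeasurable]; exact hinv A hA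
  intro n
  induction n with
  | zero =>
      intro A hA
      simp_rw [show kpow κ 0 = Kernel.id from rfl, Kernel.id_apply,
        Measure.dirac_apply' _ hA]
      rw [lintegral_indicator_one hA]
  | succ n ih =>
      intro A hA
      simp_rw [kpow_succ', Kernel.comp_apply' _ _ _ hA]
      rw [← Measure.lintegral_bind (Kernel.measurable κ).aemeasurable (Kernel.measurable_coe _ hA).aemeasurable,
        hbind]
      exact ih A hA

end Stmt15Aux


open Stmt15Aux in
/-- mean-square bound, uniform in the time horizon, for ergodic
averages of a stationary Markov chain satisfying a Doeblin minorization
condition.  The Markov chain (with kernel `κ`, invariant initial distribution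
`π`) is encoded by a process `X` on a probability space `(Ω, P)` whose initial
law is `π` and which satisfies the Markov property
`∫_B κ(X_k, A) dP = P(B ∩ X_{k+1}⁻¹ A)` for every `B` measurable with respect
to `σ(X_0, …, X_k)`; the canonical chain of the Ionescu–Tulcea construction is
such a process.  For `g` bounded measurable with `∫ g dπ = 0`,
`E[|∑_{k=1}^M g(X_k)|²] ≤ (1 + 4/ε) M (sup |g|)²`. -/
theorem stmt15
    {U : Type*} [MeasurableSpace U]
    (κ : Kernel U U) [IsMarkovKernel κ]
    (ρ : Measure U) [IsProbabilityMeasure ρ]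
    (ε : ℝ) (hε0 : 0 < ε) (hε1 : ε ≤ 1)
    (hminor : ∀ u : U, ∀ A : Set U, MeasurableSet A →
      ENNReal.ofReal ε * ρ A ≤ κ u A)
    (π : Measure U) [IsProbabilityMeasure π]
    (hinv : ∀ A : Set U, MeasurableSet A → ∫⁻ u, κ u A ∂π = π A)
    {Ω : Type*} [MeasurableSpace Ω]
    (P : Measure Ω) [IsProbabilityMeasure P]
    (X : ℕ → Ω → U) (hXmeas : ∀ k, Measurable (X k))
    (hinit : P.map (X 0) = π)
    (hMarkov : ∀ (k : ℕ) (A : Set U), MeasurableSet A →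
      ∀ B : Set Ω,
        MeasurableSet[⨆ i ∈ Finset.range (k + 1),
          MeasurableSpace.comap (X i) inferInstance] B →
        ∫⁻ ω in B, κ (X k ω) A ∂P = P (B ∩ X (k + 1) ⁻¹' A)) :
    ∀ (g : U → ℝ), Measurable g →
      ∀ Bg : ℝ, (∀ u, |g u| ≤ Bg) →
      (∫ u, g u ∂π) = 0 →
      ∀ M : ℕ,
        (∫ ω, (∑ k ∈ Finset.Icc 1 M, g (X k ω)) ^ 2 ∂P)
          ≤ (1 + 4 / ε) * M * Bg ^ 2 := by
  intro g hg Bg hBg hgzero M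
  classical
  -- Ω is nonempty, hence Bg ≥ 0
  have hΩ : Nonempty Ω := by
    by_contra hne
    rw [not_nonempty_iff] at hne
    have h1 : P Set.univ = 1 := measure_univ
    rw [Set.univ_eq_empty_iff.mpr hne, measure_empty] at h1
    exact one_ne_zero h1.symm
  obtain ⟨ω₀⟩ := hΩ
  have hBg0 : 0 ≤ Bg := le_trans (abs_nonneg _) (hBg (X 0 ω₀))
  have hr0 : (0:ℝ) ≤ 1 - ε := by linarith
  -- the iterated-kernel averages of g
  have hFmeas : ∀ n, Measurable fun u => ∫ v, g v ∂(kpow κ n u) := fun n =>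
    (MeasureTheory.StronglyMeasurable.integral_kernel_prod_right (κ := kpow κ n)
      (f := fun _ v => g v)
      (hg.stronglyMeasurable.comp_measurable measurable_snd)).measurable
  have hFbound : ∀ n u, |∫ v, g v ∂(kpow κ n u)| ≤ Bg := fun n u =>
    abs_integral_le _ hBg
  -- π-mean of the averages is zero
  have hinvn := kpow_inv κ π hinv
  have hbindn : ∀ n, π.bind (kpow κ n) = π := fun n => Measure.ext fun A hA => by
    rw [Measure.bind_apply hA (Kernel.measurable _).aemeasurable]; exact hinvn n A hA
  have hFzero : ∀ n, ∫ u, (∫ v, g v ∂(kpow κ n u)) ∂π = 0 := by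
    intro n
    have h := integral_bind_of_bounded π (kpow κ n) hg hBg
    rw [hbindn n] at h
    rw [← h, hgzero]
  -- uniform decay of the averages
  have hFsmall : ∀ n u, |∫ v, g v ∂(kpow κ n u)| ≤ 2 * ((1 - ε) ^ n * Bg) := by
    intro n u
    obtain ⟨c, hc⟩ := contraction κ ρ ε hε0 hε1 hminor hg hBg n
    have hFint : Integrable (fun u => ∫ v, g v ∂(kpow κ n u)) π :=
      integrable_of_bound _ (hFmeas n).aestronglyMeasurable Bg (hFbound n)
    have hcb : |c| ≤ (1 - ε) ^ n * Bg := by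
      have h1 : ∫ u', (c - ∫ v, g v ∂(kpow κ n u')) ∂π = c := by
        rw [integral_sub (integrable_const c) hFint, hFzero n, integral_const]
        simp
      calc |c| = |∫ u', (c - ∫ v, g v ∂(kpow κ n u')) ∂π| := by rw [h1]
        _ ≤ (1 - ε) ^ n * Bg := abs_integral_le π
            (fun u' => by rw [abs_sub_comm]; exact hc u')
    calc |∫ v, g v ∂(kpow κ n u)|
        = |((∫ v, g v ∂(kpow κ n u)) - c) + c| := by ring_nf
      _ ≤ |(∫ v, g v ∂(kpow κ n u)) - c| + |c| := abs_add_le _ _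
      _ ≤ (1 - ε) ^ n * Bg + (1 - ε) ^ n * Bg := add_le_add (hc u) hcb
      _ = 2 * ((1 - ε) ^ n * Bg) := by ring
  -- joint laws
  have hjoint := joint_law κ π P X hXmeas hinit hinv hMarkov
  -- correlation bound
  have hcorr : ∀ k n, |∫ ω, g (X k ω) * g (X (k + n) ω) ∂P|
      ≤ 2 * Bg ^ 2 * (1 - ε) ^ n := by
    intro k n
    haveI : IsProbabilityMeasure (π ⊗ₘ kpow κ n) :=
      ⟨by rw [Measure.compProd_apply_univ]; exact measure_univ⟩
    have hpair : Measurable fun ω => (X k ω, X (k + n) ω) :=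
      (hXmeas k).prodMk (hXmeas (k + n))
    have hfmeas : Measurable fun p : U × U => g p.1 * g p.2 :=
      (hg.comp measurable_fst).mul (hg.comp measurable_snd)
    have h1 : ∫ ω, g (X k ω) * g (X (k + n) ω) ∂P
        = ∫ p : U × U, g p.1 * g p.2 ∂(π ⊗ₘ kpow κ n) := by
      rw [← hjoint k n, integral_map hpair.aemeasurable hfmeas.aestronglyMeasurable]
    have hint2 : Integrable (fun p : U × U => g p.1 * g p.2) (π ⊗ₘ kpow κ n) :=
      integrable_of_bound _ hfmeas.aestronglyMeasurable (Bg * Bg) (fun p => by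
        rw [abs_mul]; exact mul_le_mul (hBg _) (hBg _) (abs_nonneg _) hBg0)
    have h2 : ∫ p : U × U, g p.1 * g p.2 ∂(π ⊗ₘ kpow κ n)
        = ∫ u, g u * ∫ v, g v ∂(kpow κ n u) ∂π := by
      rw [Measure.integral_compProd hint2]
      simp_rw [integral_const_mul]
    rw [h1, h2]
    have hb : ∀ u, |g u * ∫ v, g v ∂(kpow κ n u)| ≤ Bg * (2 * ((1 - ε) ^ n * Bg)) :=
      fun u => by
        rw [abs_mul]
        exact mul_le_mul (hBg u) (hFsmall n u) (abs_nonneg _) hBg0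
    calc |∫ u, g u * ∫ v, g v ∂(kpow κ n u) ∂π|
        ≤ Bg * (2 * ((1 - ε) ^ n * Bg)) := abs_integral_le π hb
      _ = 2 * Bg ^ 2 * (1 - ε) ^ n := by ring
  have hcorr' : ∀ k l, |∫ ω, g (X k ω) * g (X l ω) ∂P|
      ≤ 2 * Bg ^ 2 * (1 - ε) ^ (Nat.dist k l) := by
    intro k l
    rcases le_total k l with hkl | hkl
    · have h2 : Nat.dist k l = l - k := by simp [Nat.dist]; omega
      have h := hcorr k (l - k)
      rw [show k + (l - k) = l from by omega] at h
      rw [h2]; exact h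
    · have h2 : Nat.dist k l = k - l := by simp [Nat.dist]; omega
      have h := hcorr l (k - l)
      rw [show l + (k - l) = k from by omega] at h
      rw [h2]
      calc |∫ ω, g (X k ω) * g (X l ω) ∂P|
          = |∫ ω, g (X l ω) * g (X k ω) ∂P| := by
            rw [show (fun ω => g (X k ω) * g (X l ω))
              = fun ω => g (X l ω) * g (X k ω) from funext fun ω => mul_comm _ _]
        _ ≤ 2 * Bg ^ 2 * (1 - ε) ^ (k - l) := h
  -- expand the square
  have hintkl : ∀ k l, Integrable (fun ω => g (X k ω) * g (X l ω)) P := fun k l =>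
    integrable_of_bound _
      (((hg.comp (hXmeas k)).mul (hg.comp (hXmeas l))).aestronglyMeasurable)
      (Bg * Bg) (fun ω => by
        rw [abs_mul]; exact mul_le_mul (hBg _) (hBg _) (abs_nonneg _) hBg0)
  have hexpand : ∫ ω, (∑ k ∈ Finset.Icc 1 M, g (X k ω)) ^ 2 ∂P
      = ∑ k ∈ Finset.Icc 1 M, ∑ l ∈ Finset.Icc 1 M,
          ∫ ω, g (X k ω) * g (X l ω) ∂P := by
    have h1 : ∀ ω : Ω, (∑ k ∈ Finset.Icc 1 M, g (X k ω)) ^ 2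
        = ∑ k ∈ Finset.Icc 1 M, ∑ l ∈ Finset.Icc 1 M, g (X k ω) * g (X l ω) := by
      intro ω; rw [sq, Finset.sum_mul_sum]
    simp_rw [h1]
    rw [integral_finset_sum _
      (fun k _ => integrable_finset_sum _ (fun l _ => hintkl k l))]
    refine Finset.sum_congr rfl fun k _ => ?_
    rw [integral_finset_sum _ fun l _ => hintkl k l]
  rw [hexpand]
  have hM2 : (0:ℝ) ≤ (M:ℝ) * Bg ^ 2 := mul_nonneg (Nat.cast_nonneg M) (sq_nonneg Bg)
  calc ∑ k ∈ Finset.Icc 1 M, ∑ l ∈ Finset.Icc 1 M, ∫ ω, g (X k ω) * g (X l ω) ∂P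
      ≤ ∑ k ∈ Finset.Icc 1 M, ∑ l ∈ Finset.Icc 1 M,
          2 * Bg ^ 2 * (1 - ε) ^ (Nat.dist k l) :=
        Finset.sum_le_sum fun k _ => Finset.sum_le_sum fun l _ =>
          le_trans (le_abs_self _) (hcorr' k l)
    _ = 2 * Bg ^ 2 * ∑ k ∈ Finset.Icc 1 M, ∑ l ∈ Finset.Icc 1 M,
          (1 - ε) ^ (Nat.dist k l) := by
        simp_rw [← Finset.mul_sum]
    _ ≤ 2 * Bg ^ 2 * ((M:ℝ) * (2 / ε)) := by
        apply mul_le_mul_of_nonneg_left ?_ (by positivity)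
        calc ∑ k ∈ Finset.Icc 1 M, ∑ l ∈ Finset.Icc 1 M, (1 - ε) ^ (Nat.dist k l)
            ≤ ∑ k ∈ Finset.Icc 1 M, 2 / ε :=
              Finset.sum_le_sum fun k _ => sum_dist_le hε0 hε1 M k
          _ = (M:ℝ) * (2 / ε) := by
              rw [Finset.sum_const, Nat.card_Icc]
              simp [nsmul_eq_mul]
    _ ≤ (1 + 4 / ε) * M * Bg ^ 2 := by
        have h4 : 2 * Bg ^ 2 * ((M:ℝ) * (2 / ε)) = (4 / ε) * M * Bg ^ 2 := by ring
        rw [h4]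
        have : (4 / ε) * (M:ℝ) * Bg ^ 2 + 1 * ((M:ℝ) * Bg ^ 2)
            = (1 + 4 / ε) * M * Bg ^ 2 := by ring
        linarith [hM2]
end

section
/- Let (u^{(k)})_{k≥0} be the canonical Markov chain on U with transition kernel p (the independence-sampler kernel) and initial distribution ρ. Then there exists a constant C > 0 depending only on Φ⋆ such that for every bounded measurable g : U → ℝ and every M ∈ ℕ, ( E[ | ∫_U g dπ − (1/M) ∑_{k=1}^M g(u^{(k)}) |² ] )^{1/2} ≤ C (sup_{u∈U} |g(u)|) M^{−1/2}, where E denotes expectation with respect to the law of the chain. -/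
open MeasureTheory

universe u

set_option maxHeartbeats 1000000
set_option linter.unusedSectionVars false

open MeasureTheory Real ENNReal NNReal

namespace Stmt16Aux

variable {U : Type u} [MeasurableSpace U]

noncomputable def al (Φ : U → ℝ) (u v : U) : ℝ := min 1 (Real.exp (Φ u - Φ v))

noncomputable def acc (ρ : Measure U) (Φ : U → ℝ) (u : U) : ℝ := ∫ v, al Φ u v ∂ρ

noncomputable def Pop (ρ : Measure U) (Φ : U → ℝ) (f : U → ℝ) (u : U) : ℝ :=
  (∫ v, al Φ u v * f v ∂ρ) + (1 - acc ρ Φ u) * f u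

noncomputable def Znum (ρ : Measure U) (Φ : U → ℝ) : ℝ := ∫ v, Real.exp (-Φ v) ∂ρ

variable {ρ : Measure U} [IsProbabilityMeasure ρ] {Φ : U → ℝ}

lemma al_nonneg (Φ : U → ℝ) (u v : U) : 0 ≤ al Φ u v :=
  le_min zero_le_one (Real.exp_pos _).le

lemma al_le_one (Φ : U → ℝ) (u v : U) : al Φ u v ≤ 1 := min_le_left _ _

lemma al_meas (hΦ : Measurable Φ) :
    Measurable (fun p : U × U => al Φ p.1 p.2) :=
  measurable_const.min (((hΦ.comp measurable_fst).sub (hΦ.comp measurable_snd)).exp)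

lemma al_meas_right (hΦ : Measurable Φ) (u : U) : Measurable (fun v => al Φ u v) :=
  measurable_const.min ((measurable_const.sub hΦ).exp)

lemma exp_neg_le_al (h0 : ∀ u, 0 ≤ Φ u) (u v : U) :
    Real.exp (-Φ v) ≤ al Φ u v := by
  refine le_min ?_ ?_
  · exact Real.exp_le_one_iff.2 (by linarith [h0 v])
  · exact Real.exp_le_exp.2 (by linarith [h0 u])

lemma al_symm (Φ : U → ℝ) (u v : U) :
    Real.exp (-Φ u) * al Φ u v = Real.exp (-Φ v) * al Φ v u := by
  unfold al
  rw [mul_comm, mul_comm (Real.exp (-Φ v)),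
    min_mul_of_nonneg _ _ (Real.exp_pos (-Φ u)).le,
    min_mul_of_nonneg _ _ (Real.exp_pos (-Φ v)).le,
    one_mul, one_mul, ← Real.exp_add, ← Real.exp_add]
  ring_nf
  rw [min_comm]

lemma intg {α : Type*} {mα : MeasurableSpace α} {μ : Measure α} [IsFiniteMeasure μ]
    {f : α → ℝ} (hf : AEStronglyMeasurable f μ) (c : ℝ) (h : ∀ x, |f x| ≤ c) :
    Integrable f μ :=
  (integrable_const c).mono' hf (ae_of_all _ fun x => (Real.norm_eq_abs _ ▸ h x))

lemma intg2 {f : U → ℝ} (hf : Measurable f) (c : ℝ) (h : ∀ x, |f x| ≤ c) :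
    Integrable f ρ := intg hf.aestronglyMeasurable c h

lemma abs_mul3_le {a b d c : ℝ} (ha : |a| ≤ 1) (hb : |b| ≤ 1) (hd : |d| ≤ c) :
    |a * (b * d)| ≤ c := by
  rw [abs_mul, abs_mul]
  have h1 : |b| * |d| ≤ c :=
    le_trans (mul_le_mul_of_nonneg_right hb (abs_nonneg d)) (by simpa using hd)
  have h2 : |a| * (|b| * |d|) ≤ 1 * (|b| * |d|) :=
    mul_le_mul_of_nonneg_right ha (by positivity)
  linarith [one_mul (|b| * |d|)]

lemma abs_int_le {α : Type*} {mα : MeasurableSpace α} (μ : Measure α) (f : α → ℝ) :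
    |∫ x, f x ∂μ| ≤ ∫ x, |f x| ∂μ := by
  simpa [Real.norm_eq_abs] using norm_integral_le_integral_norm (μ := μ) f

lemma exp_neg_abs_le (h0 : ∀ u, 0 ≤ Φ u) (v : U) : |Real.exp (-Φ v)| ≤ 1 := by
  rw [abs_of_pos (Real.exp_pos _)]
  exact Real.exp_le_one_iff.2 (by linarith [h0 v])

lemma Znum_nonneg : 0 ≤ Znum ρ Φ :=
  integral_nonneg fun v => (Real.exp_pos _).le

lemma Znum_le_one (hΦm : Measurable Φ) (h0 : ∀ u, 0 ≤ Φ u) : Znum ρ Φ ≤ 1 := by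
  have : Znum ρ Φ ≤ ∫ _v, (1 : ℝ) ∂ρ := by
    refine integral_mono (intg2 hΦm.neg.exp 1 (exp_neg_abs_le h0)) (integrable_const 1)
      fun v => Real.exp_le_one_iff.2 (by linarith [h0 v])
  simpa using this

lemma Znum_pos {Φstar : ℝ} (hΦm : Measurable Φ) (h0 : ∀ u, 0 ≤ Φ u)
    (hb : ∀ u, Φ u ≤ Φstar) : Real.exp (-Φstar) ≤ Znum ρ Φ := by
  have : ∫ _v, Real.exp (-Φstar) ∂ρ ≤ Znum ρ Φ :=
    integral_mono (integrable_const _) (intg2 hΦm.neg.exp 1 (exp_neg_abs_le h0))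
      fun v => Real.exp_le_exp.2 (by linarith [hb v])
  simpa using this


lemma acc_meas (hΦ : Measurable Φ) : Measurable (acc ρ Φ) :=
  (al_meas hΦ).stronglyMeasurable.integral_prod_right'.measurable

lemma acc_nonneg (u : U) : 0 ≤ acc ρ Φ u :=
  integral_nonneg fun v => al_nonneg Φ u v

lemma al_intg (hΦ : Measurable Φ) (u : U) : Integrable (fun v => al Φ u v) ρ :=
  intg2 (al_meas_right hΦ u) 1 fun v => by
    rw [abs_of_nonneg (al_nonneg Φ u v)]; exact al_le_one Φ u v

lemma acc_le_one (hΦ : Measurable Φ) (u : U) : acc ρ Φ u ≤ 1 := by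
  have : acc ρ Φ u ≤ ∫ _v, (1 : ℝ) ∂ρ :=
    integral_mono (al_intg hΦ u) (integrable_const 1) fun v => al_le_one Φ u v
  simpa using this

lemma Znum_le_acc (hΦ : Measurable Φ) (h0 : ∀ u, 0 ≤ Φ u) (u : U) :
    Znum ρ Φ ≤ acc ρ Φ u :=
  integral_mono (intg2 hΦ.neg.exp 1 (exp_neg_abs_le h0)) (al_intg hΦ u)
    fun v => exp_neg_le_al h0 u v

lemma Pop_meas (hΦ : Measurable Φ) {f : U → ℝ} (hf : Measurable f) :
    Measurable (Pop ρ Φ f) := by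
  have h1 : Measurable fun u => ∫ v, al Φ u v * f v ∂ρ :=
    (((al_meas hΦ).mul (hf.comp measurable_snd)).stronglyMeasurable.integral_prod_right').measurable
  exact h1.add ((measurable_const.sub (acc_meas hΦ)).mul hf)

lemma alf_intg (hΦ : Measurable Φ) {f : U → ℝ} (hf : Measurable f) {c : ℝ}
    (hb : ∀ x, |f x| ≤ c) (u : U) : Integrable (fun v => al Φ u v * f v) ρ := by
  refine intg2 ((al_meas_right hΦ u).mul hf) c fun v => ?_
  rw [abs_mul, abs_of_nonneg (al_nonneg Φ u v)]
  calc al Φ u v * |f v| ≤ 1 * c :=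
        mul_le_mul (al_le_one Φ u v) (hb v) (abs_nonneg _)
          zero_le_one
    _ = c := one_mul c

lemma int_al_f_le (hΦ : Measurable Φ) {f : U → ℝ} (hf : Measurable f) {c : ℝ}
    (hb : ∀ x, |f x| ≤ c) (u : U) :
    |∫ v, al Φ u v * f v ∂ρ| ≤ acc ρ Φ u * c := by
  have h1 : |∫ v, al Φ u v * f v ∂ρ| ≤ ∫ v, |al Φ u v * f v| ∂ρ :=
    abs_int_le ρ _
  have h2 : ∫ v, |al Φ u v * f v| ∂ρ ≤ ∫ v, al Φ u v * c ∂ρ := by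
    refine integral_mono (alf_intg hΦ hf hb u).abs ((al_intg hΦ u).mul_const c)
      fun v => ?_
    rw [abs_mul, abs_of_nonneg (al_nonneg Φ u v)]
    exact mul_le_mul_of_nonneg_left (hb v) (al_nonneg Φ u v)
  have h3 : ∫ v, al Φ u v * c ∂ρ = acc ρ Φ u * c := integral_mul_const c _
  linarith

lemma Pop_bound (hΦ : Measurable Φ) {f : U → ℝ} (hf : Measurable f) {c : ℝ}
    (hb : ∀ x, |f x| ≤ c) (u : U) : |Pop ρ Φ f u| ≤ c := by
  have hc : 0 ≤ c := le_trans (abs_nonneg _) (hb u)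
  have h1 := int_al_f_le (ρ := ρ) hΦ hf hb u
  have h2 : |(1 - acc ρ Φ u) * f u| ≤ (1 - acc ρ Φ u) * c := by
    rw [abs_mul, abs_of_nonneg (by linarith [acc_le_one (ρ := ρ) hΦ u])]
    exact mul_le_mul_of_nonneg_left (hb u) (by linarith [acc_le_one (ρ := ρ) hΦ u])
  have h4 := abs_add_le (∫ v, al Φ u v * f v ∂ρ) ((1 - acc ρ Φ u) * f u)
  have h5 : acc ρ Φ u * c + (1 - acc ρ Φ u) * c = c := by ring
  have := acc_le_one (ρ := ρ) hΦ u
  unfold Pop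
  nlinarith [acc_nonneg (ρ := ρ) (Φ := Φ) u]

lemma Pop_contract (hΦ : Measurable Φ) (h0 : ∀ u, 0 ≤ Φ u) {f : U → ℝ}
    (hf : Measurable f) {c : ℝ} (hb : ∀ x, |f x| ≤ c)
    (hmean : ∫ v, Real.exp (-Φ v) * f v ∂ρ = 0) (u : U) :
    |Pop ρ Φ f u| ≤ (1 - Znum ρ Φ) * c := by
  have hc : 0 ≤ c := le_trans (abs_nonneg _) (hb u)
  have hint1 : Integrable (fun v => (al Φ u v - Real.exp (-Φ v)) * f v) ρ := by
    refine intg2 (((al_meas_right hΦ u).sub hΦ.neg.exp).mul hf) c fun v => ?_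
    rw [abs_mul]
    have h1 : |al Φ u v - Real.exp (-Φ v)| ≤ 1 := by
      rw [abs_of_nonneg (by linarith [exp_neg_le_al h0 u v])]
      have := Real.exp_pos (-Φ v)
      linarith [al_le_one Φ u v]
    calc |al Φ u v - Real.exp (-Φ v)| * |f v| ≤ 1 * c :=
          mul_le_mul h1 (hb v) (abs_nonneg _) zero_le_one
      _ = c := one_mul c
  have hint2 : Integrable (fun v => Real.exp (-Φ v) * f v) ρ := by
    refine intg2 (hΦ.neg.exp.mul hf) c fun v => ?_
    rw [abs_mul]
    calc |Real.exp (-Φ v)| * |f v| ≤ 1 * c :=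
          mul_le_mul (exp_neg_abs_le h0 v) (hb v) (abs_nonneg _) zero_le_one
      _ = c := one_mul c
  have hsplit : ∫ v, al Φ u v * f v ∂ρ
      = ∫ v, (al Φ u v - Real.exp (-Φ v)) * f v ∂ρ := by
    rw [← sub_zero (∫ v, al Φ u v * f v ∂ρ), ← hmean, ← integral_sub (alf_intg hΦ hf hb u) hint2]
    congr 1; ext v; ring
  -- bound the first piece
  have h1 : |∫ v, (al Φ u v - Real.exp (-Φ v)) * f v ∂ρ|
      ≤ (acc ρ Φ u - Znum ρ Φ) * c := by
    have ha : |∫ v, (al Φ u v - Real.exp (-Φ v)) * f v ∂ρ|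
        ≤ ∫ v, (al Φ u v - Real.exp (-Φ v)) * c ∂ρ := by
      refine le_trans (abs_int_le ρ _) ?_
      refine integral_mono hint1.abs
        (((al_intg hΦ u).sub (intg2 hΦ.neg.exp 1 (exp_neg_abs_le h0))).mul_const c)
        fun v => ?_
      rw [abs_mul, abs_of_nonneg (by linarith [exp_neg_le_al h0 u v])]
      exact mul_le_mul_of_nonneg_left (hb v)
        (by linarith [exp_neg_le_al h0 u v])
    have hbb : ∫ v, (al Φ u v - Real.exp (-Φ v)) * c ∂ρ = (acc ρ Φ u - Znum ρ Φ) * c := by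
      rw [integral_mul_const, integral_sub (al_intg hΦ u) (intg2 (f := fun v => Real.exp (-Φ v)) hΦ.neg.exp 1 (exp_neg_abs_le h0))]
      rfl
    linarith
  have h2 : |(1 - acc ρ Φ u) * f u| ≤ (1 - acc ρ Φ u) * c := by
    rw [abs_mul, abs_of_nonneg (by linarith [acc_le_one (ρ := ρ) hΦ u])]
    exact mul_le_mul_of_nonneg_left (hb u) (by linarith [acc_le_one (ρ := ρ) hΦ u])
  have h4 := abs_add_le (∫ v, (al Φ u v - Real.exp (-Φ v)) * f v ∂ρ) ((1 - acc ρ Φ u) * f u)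
  unfold Pop
  rw [hsplit]
  nlinarith [Znum_le_acc (ρ := ρ) hΦ h0 u, acc_le_one (ρ := ρ) hΦ u]

lemma Pop_invariant (hΦ : Measurable Φ) (h0 : ∀ u, 0 ≤ Φ u) {f : U → ℝ}
    (hf : Measurable f) {c : ℝ} (hb : ∀ x, |f x| ≤ c) :
    ∫ u, Real.exp (-Φ u) * Pop ρ Φ f u ∂ρ = ∫ u, Real.exp (-Φ u) * f u ∂ρ := by
  by_cases hU : Nonempty U
  swap
  · simp only [not_nonempty_iff] at hU
    rw [integral_of_isEmpty, integral_of_isEmpty]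
  have hc : 0 ≤ c := le_trans (abs_nonneg _) (hb (Classical.arbitrary U))
  have hintf : Integrable (fun v => Real.exp (-Φ v) * f v) ρ := by
    refine intg2 (hΦ.neg.exp.mul hf) c fun v => ?_
    rw [abs_mul]
    calc |Real.exp (-Φ v)| * |f v| ≤ 1 * c :=
          mul_le_mul (exp_neg_abs_le h0 v) (hb v) (abs_nonneg _) zero_le_one
      _ = c := one_mul c
  -- Fubini on the double term
  have hprod : Integrable (Function.uncurry fun u v =>
      Real.exp (-Φ u) * (al Φ u v * f v)) (ρ.prod ρ) := by
    refine intg (((hΦ.comp measurable_fst).neg.exp.mul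
      ((al_meas hΦ).mul (hf.comp measurable_snd))).aestronglyMeasurable) c fun p => ?_
    rw [Function.uncurry]
    exact abs_mul3_le (exp_neg_abs_le h0 p.1)
      (by rw [abs_of_nonneg (al_nonneg _ _ _)]; exact al_le_one _ _ _) (hb p.2)
  have hswap : ∫ u, ∫ v, Real.exp (-Φ u) * (al Φ u v * f v) ∂ρ ∂ρ
      = ∫ v, ∫ u, Real.exp (-Φ u) * (al Φ u v * f v) ∂ρ ∂ρ :=
    integral_integral_swap hprod
  have hinner : ∀ v, (∫ u, Real.exp (-Φ u) * (al Φ u v * f v) ∂ρ)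
      = Real.exp (-Φ v) * (acc ρ Φ v * f v) := by
    intro v
    have : ∀ u, Real.exp (-Φ u) * (al Φ u v * f v) = (al Φ v u * f v) * Real.exp (-Φ v) := by
      intro u
      rw [← mul_assoc, al_symm Φ u v]
      ring
    rw [integral_congr_ae (ae_of_all _ fun u => this u), integral_mul_const,
      integral_mul_const]
    unfold acc
    ring
  have hterm1 : ∫ u, Real.exp (-Φ u) * ∫ v, al Φ u v * f v ∂ρ ∂ρ
      = ∫ v, Real.exp (-Φ v) * (acc ρ Φ v * f v) ∂ρ := by
    have : ∀ u, Real.exp (-Φ u) * ∫ v, al Φ u v * f v ∂ρ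
        = ∫ v, Real.exp (-Φ u) * (al Φ u v * f v) ∂ρ := fun u =>
      (integral_const_mul _ _).symm
    rw [integral_congr_ae (ae_of_all _ this), hswap]
    exact integral_congr_ae (ae_of_all _ hinner)
  -- put things together
  have hint1 : Integrable (fun u => Real.exp (-Φ u) * ∫ v, al Φ u v * f v ∂ρ) ρ := by
    refine intg2 (hΦ.neg.exp.mul
      (((al_meas hΦ).mul (hf.comp measurable_snd)).stronglyMeasurable.integral_prod_right'.measurable))
      c fun u => ?_
    rw [abs_mul]
    have h1 := int_al_f_le (ρ := ρ) hΦ hf hb u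
    have h2 := exp_neg_abs_le h0 u
    nlinarith [abs_nonneg (Real.exp (-Φ u)), abs_nonneg (∫ v, al Φ u v * f v ∂ρ),
      acc_le_one (ρ := ρ) hΦ u, acc_nonneg (ρ := ρ) (Φ := Φ) u,
      abs_int_le ρ (fun v => al Φ u v * f v)]
  have hint2 : Integrable (fun u => Real.exp (-Φ u) * ((1 - acc ρ Φ u) * f u)) ρ := by
    refine intg2 (hΦ.neg.exp.mul ((measurable_const.sub (acc_meas hΦ)).mul hf)) c
      fun u => ?_
    have h3 : |1 - acc ρ Φ u| ≤ 1 := by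
      rw [abs_of_nonneg (by linarith [acc_le_one (ρ := ρ) hΦ u])]
      linarith [acc_nonneg (ρ := ρ) (Φ := Φ) u]
    exact abs_mul3_le (exp_neg_abs_le h0 u) h3 (hb u)
  have hPop : ∀ u, Real.exp (-Φ u) * Pop ρ Φ f u
      = Real.exp (-Φ u) * ∫ v, al Φ u v * f v ∂ρ
        + Real.exp (-Φ u) * ((1 - acc ρ Φ u) * f u) := by
    intro u; unfold Pop; ring
  rw [integral_congr_ae (ae_of_all _ hPop), integral_add hint1 hint2, hterm1]
  have hint3 : Integrable (fun v => Real.exp (-Φ v) * (acc ρ Φ v * f v)) ρ := by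
    refine intg2 (hΦ.neg.exp.mul ((acc_meas hΦ).mul hf)) c fun u => ?_
    have h3 : |acc ρ Φ u| ≤ 1 := by
      rw [abs_of_nonneg (acc_nonneg (ρ := ρ) u)]; exact acc_le_one hΦ u
    exact abs_mul3_le (exp_neg_abs_le h0 u) h3 (hb u)
  rw [← integral_add hint3 hint2]
  congr 1; ext u; ring


lemma nonemptyU (_hρ : IsProbabilityMeasure ρ) : Nonempty U := by
  by_contra h
  rw [not_nonempty_iff] at h
  have h1 : ρ Set.univ = 1 := measure_univ
  rw [Set.univ_eq_empty_iff.2 h] at h1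
  simp at h1

lemma indepKernel_eq (u : U) (A : Set U) :
    indepKernel ρ Φ u A
      = (∫ v in A, al Φ u v ∂ρ) + (1 - acc ρ Φ u) * A.indicator (fun _ => (1 : ℝ)) u := rfl

lemma integral_posterior (hΦm : Measurable Φ) {f : U → ℝ} (hf : Measurable f) :
    ∫ u, f u ∂(posterior ρ Φ)
      = ∫ u, (Real.exp (-Φ u) / Znum ρ Φ) * f u ∂ρ := by
  have hd : Measurable fun u => (Real.exp (-Φ u) / Znum ρ Φ).toNNReal :=
    (hΦm.neg.exp.div measurable_const).real_toNNReal
  rw [posterior,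
    show (fun u => ENNReal.ofReal (Real.exp (-Φ u) / (∫ v, Real.exp (-Φ v) ∂ρ)))
      = fun u => ((Real.exp (-Φ u) / Znum ρ Φ).toNNReal : ℝ≥0∞) from rfl,
    integral_withDensity_eq_integral_smul hd]
  refine integral_congr_ae (ae_of_all _ fun u => ?_)
  show (Real.exp (-Φ u) / Znum ρ Φ).toNNReal • f u = Real.exp (-Φ u) / Znum ρ Φ * f u
  rw [NNReal.smul_def, smul_eq_mul,
    Real.coe_toNNReal _ (div_nonneg (Real.exp_pos _).le (Znum_nonneg (ρ := ρ)))]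

lemma posterior_isProb (hΦm : Measurable Φ) {Φstar : ℝ} (h0 : ∀ u, 0 ≤ Φ u)
    (hb : ∀ u, Φ u ≤ Φstar) : IsProbabilityMeasure (posterior ρ Φ) := by
  have hZ : 0 < Znum ρ Φ := lt_of_lt_of_le (Real.exp_pos _) (Znum_pos hΦm h0 hb)
  constructor
  rw [posterior, withDensity_apply _ MeasurableSet.univ, Measure.restrict_univ]
  change ∫⁻ a, ENNReal.ofReal (Real.exp (-Φ a) / Znum ρ Φ) ∂ρ = 1
  have hint : Integrable (fun u => Real.exp (-Φ u) / Znum ρ Φ) ρ :=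
    (intg2 hΦm.neg.exp 1 (exp_neg_abs_le h0)).div_const _
  rw [← ofReal_integral_eq_lintegral_ofReal hint
    (ae_of_all _ fun u => div_nonneg (Real.exp_pos _).le hZ.le)]
  rw [integral_div]
  rw [show (∫ u, Real.exp (-Φ u) ∂ρ) = Znum ρ Φ from rfl, div_self hZ.ne']
  exact ENNReal.ofReal_one

lemma bridge {Ω : Type u} {mΩ : MeasurableSpace Ω} {P : Measure Ω} [IsProbabilityMeasure P]
    (hΦm : Measurable Φ) (h0 : ∀ u, 0 ≤ Φ u)
    {Y Y' : Ω → U} (hY : Measurable Y) (hY' : Measurable Y')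
    {B : Set Ω} (hB : MeasurableSet B)
    (hyp : ∀ A : Set U, MeasurableSet A →
      (P (B ∩ Y' ⁻¹' A)).toReal = ∫ ω in B, indepKernel ρ Φ (Y ω) A ∂P)
    {f : U → ℝ} (hf : Measurable f) {c : ℝ} (hb : ∀ x, |f x| ≤ c) :
    ∫ ω in B, f (Y' ω) ∂P = ∫ ω in B, Pop ρ Φ f (Y ω) ∂P := by
  classical
  have hU : Nonempty U := nonemptyU (inferInstance : IsProbabilityMeasure ρ)
  have hc : 0 ≤ c := le_trans (abs_nonneg _) (hb (Classical.arbitrary U))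
  have halY1 : Measurable fun p : U × Ω => al Φ (Y p.2) p.1 := by
    unfold al
    exact measurable_const.min
      (((hΦm.comp (hY.comp measurable_snd)).sub (hΦm.comp measurable_fst)).exp)
  have halY2 : Measurable fun p : Ω × U => al Φ (Y p.1) p.2 := by
    unfold al
    exact measurable_const.min
      (((hΦm.comp (hY.comp measurable_fst)).sub (hΦm.comp measurable_snd)).exp)
  have halYv : ∀ v, Measurable fun ω => al Φ (Y ω) v := fun v => by
    unfold al
    exact measurable_const.min (((hΦm.comp hY).sub measurable_const).exp)
  set Q : Measure Ω := P.restrict B with hQ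
  haveI hQfin : IsFiniteMeasure Q := hQ ▸ (inferInstance : IsFiniteMeasure (P.restrict B))
  haveI hQsf : SFinite Q := hQ ▸ (inferInstance : SFinite (P.restrict B))
  have hQle : Q Set.univ ≤ 1 := le_trans (Measure.restrict_apply_le _ _) prob_le_one
  -- the averaged density
  set D : U → ℝ := fun v => ∫ ω, al Φ (Y ω) v ∂Q with hD
  have hDmeas : Measurable D := by
    rw [hD]
    exact halY1.stronglyMeasurable.integral_prod_right'.measurable
  have hD0 : ∀ v, 0 ≤ D v := fun v => integral_nonneg fun ω => al_nonneg _ _ _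
  have hD1 : ∀ v, D v ≤ 1 := by
    intro v
    have h1 : D v ≤ ∫ _ω, (1 : ℝ) ∂Q :=
      integral_mono (intg (halYv v).aestronglyMeasurable 1
          (fun ω => by rw [abs_of_nonneg (al_nonneg _ _ _)]; exact al_le_one _ _ _))
        (integrable_const 1) fun ω => al_le_one _ _ _
    have h2 : ∫ _ω, (1 : ℝ) ∂Q = (Q Set.univ).toReal := by simp; rfl
    have h3 : (Q Set.univ).toReal ≤ 1 := by
      rw [← ENNReal.toReal_one]
      exact ENNReal.toReal_mono ENNReal.one_ne_top hQle
    linarith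
  set μ1 : Measure U := Q.map Y' with hμ1
  set ν1 : Measure U := ρ.withDensity (fun v => ENNReal.ofReal (D v)) with hν1
  set ν2 : Measure U :=
    (Q.withDensity fun ω => ENNReal.ofReal (1 - acc ρ Φ (Y ω))).map Y with hν2
  have haccY : Measurable fun ω => acc ρ Φ (Y ω) := (acc_meas hΦm).comp hY
  -- measure identity
  have hme : μ1 = ν1 + ν2 := by
    ext A hA
    have hμ1A : μ1 A = P (B ∩ Y' ⁻¹' A) := by
      rw [hμ1, Measure.map_apply hY' hA, hQ, Measure.restrict_apply (hY' hA),
        Set.inter_comm]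
    have hν1A : ν1 A = ENNReal.ofReal (∫ v in A, D v ∂ρ) := by
      rw [hν1, withDensity_apply _ hA,
        ← ofReal_integral_eq_lintegral_ofReal
          (intg hDmeas.aestronglyMeasurable 1 fun v => by
            rw [abs_of_nonneg (hD0 v)]; exact hD1 v)
          (ae_of_all _ hD0)]
    have hν2A : ν2 A = ENNReal.ofReal (∫ ω in Y ⁻¹' A, (1 - acc ρ Φ (Y ω)) ∂Q) := by
      rw [hν2, Measure.map_apply hY hA, withDensity_apply _ (hY hA),
        ← ofReal_integral_eq_lintegral_ofReal
          (intg (show Measurable (fun ω => 1 - acc ρ Φ (Y ω)) from measurable_const.sub haccY).aestronglyMeasurable 1 fun ω => by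
            rw [abs_of_nonneg (by linarith [acc_le_one (ρ := ρ) hΦm (Y ω)])]
            linarith [acc_nonneg (ρ := ρ) (Φ := Φ) (Y ω)])
          (ae_of_all _ fun ω => by
            simp only [Pi.zero_apply]
            linarith [acc_le_one (ρ := ρ) hΦm (Y ω)])]
    -- decompose the kernel integral
    have hsplit : ∫ ω in B, indepKernel ρ Φ (Y ω) A ∂P
        = (∫ v in A, D v ∂ρ) + ∫ ω in Y ⁻¹' A, (1 - acc ρ Φ (Y ω)) ∂Q := by
      have hT1meas : Measurable fun ω => ∫ v in A, al Φ (Y ω) v ∂ρ :=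
        halY2.stronglyMeasurable.integral_prod_right'.measurable
      have hT1b : ∀ ω, |∫ v in A, al Φ (Y ω) v ∂ρ| ≤ 1 := by
        intro ω
        rw [abs_of_nonneg (integral_nonneg fun v => al_nonneg _ _ _)]
        have h1 : ∫ v in A, al Φ (Y ω) v ∂ρ ≤ ∫ _v in A, (1 : ℝ) ∂ρ :=
          integral_mono (intg ((al_meas_right hΦm (Y ω))).aestronglyMeasurable 1
              fun v => by rw [abs_of_nonneg (al_nonneg _ _ _)]; exact al_le_one _ _ _)
            (integrable_const 1) fun v => al_le_one _ _ _
        have h2 : ∫ _v in A, (1 : ℝ) ∂ρ = (ρ A).toReal := by simp; rfl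
        have h3 : (ρ A).toReal ≤ 1 := by
          rw [← ENNReal.toReal_one]
          exact ENNReal.toReal_mono ENNReal.one_ne_top prob_le_one
        linarith
      have hT2b : ∀ ω, |(1 - acc ρ Φ (Y ω)) * A.indicator (fun _ => (1:ℝ)) (Y ω)| ≤ 1 := by
        intro ω
        have hi : |A.indicator (fun _ => (1:ℝ)) (Y ω)| ≤ 1 := by
          rw [Set.indicator_apply]
          split <;> simp
        rw [abs_mul]
        have h1 : |1 - acc ρ Φ (Y ω)| ≤ 1 := by
          rw [abs_of_nonneg (by linarith [acc_le_one (ρ := ρ) hΦm (Y ω)])]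
          linarith [acc_nonneg (ρ := ρ) (Φ := Φ) (Y ω)]
        nlinarith [abs_nonneg (1 - acc ρ Φ (Y ω)),
          abs_nonneg (A.indicator (fun _ => (1:ℝ)) (Y ω))]
      have hT2meas : Measurable fun ω =>
          (1 - acc ρ Φ (Y ω)) * A.indicator (fun _ => (1:ℝ)) (Y ω) :=
        (measurable_const.sub haccY).mul
          ((measurable_one.indicator hA).comp hY)
      have h1 : ∫ ω in B, indepKernel ρ Φ (Y ω) A ∂P
          = (∫ ω, (∫ v in A, al Φ (Y ω) v ∂ρ) ∂Q)
            + ∫ ω, (1 - acc ρ Φ (Y ω)) * A.indicator (fun _ => (1:ℝ)) (Y ω) ∂Q := by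
        rw [← integral_add (intg hT1meas.aestronglyMeasurable 1 hT1b)
          (intg hT2meas.aestronglyMeasurable 1 hT2b)]
        rfl
      have h2 : ∫ ω, (∫ v in A, al Φ (Y ω) v ∂ρ) ∂Q = ∫ v in A, D v ∂ρ := by
        refine integral_integral_swap ?_
        refine intg ?_ 1 fun p => by
          rw [Function.uncurry, abs_of_nonneg (al_nonneg _ _ _)]
          exact al_le_one _ _ _
        exact halY2.aestronglyMeasurable
      have h3 : ∫ ω, (1 - acc ρ Φ (Y ω)) * A.indicator (fun _ => (1:ℝ)) (Y ω) ∂Q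
          = ∫ ω in Y ⁻¹' A, (1 - acc ρ Φ (Y ω)) ∂Q := by
        rw [← integral_indicator (hY hA)]
        refine integral_congr_ae (ae_of_all _ fun ω => ?_)
        simp only [Set.indicator_apply, Set.mem_preimage]
        split <;> simp
      rw [h1, h2, h3]
    -- combine
    have hr1 : 0 ≤ ∫ v in A, D v ∂ρ := integral_nonneg fun v => hD0 v
    have hr2 : 0 ≤ ∫ ω in Y ⁻¹' A, (1 - acc ρ Φ (Y ω)) ∂Q :=
      integral_nonneg fun ω => by
        simp only [Pi.zero_apply]
        linarith [acc_le_one (ρ := ρ) hΦm (Y ω)]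
    have := hyp A hA
    rw [hsplit] at this
    simp only [Measure.coe_add, Pi.add_apply]
    rw [hμ1A, ← ENNReal.ofReal_toReal (measure_ne_top P _), this,
      ENNReal.ofReal_add hr1 hr2, hν1A, hν2A]
  -- finite measure instances
  have hν1fin : IsFiniteMeasure ν1 := by
    constructor
    rw [hν1, withDensity_apply _ MeasurableSet.univ, Measure.restrict_univ]
    calc ∫⁻ v, ENNReal.ofReal (D v) ∂ρ ≤ ∫⁻ _v, 1 ∂ρ :=
          lintegral_mono fun v => ENNReal.ofReal_le_one.2 (hD1 v)
      _ = 1 := by simp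
      _ < ⊤ := ENNReal.one_lt_top
  have hν2fin : IsFiniteMeasure ν2 := by
    constructor
    rw [hν2, Measure.map_apply hY MeasurableSet.univ, Set.preimage_univ,
      withDensity_apply _ MeasurableSet.univ, Measure.restrict_univ]
    calc ∫⁻ ω, ENNReal.ofReal (1 - acc ρ Φ (Y ω)) ∂Q ≤ ∫⁻ _ω, 1 ∂Q :=
          lintegral_mono fun ω => ENNReal.ofReal_le_one.2
            (by linarith [acc_nonneg (ρ := ρ) (Φ := Φ) (Y ω)])
      _ = Q Set.univ := by simp
      _ < ⊤ := lt_of_le_of_lt hQle ENNReal.one_lt_top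
  -- compute the three integrals
  have e0 : ∫ ω in B, f (Y' ω) ∂P = ∫ u, f u ∂μ1 :=
    (integral_map hY'.aemeasurable hf.aestronglyMeasurable).symm
  have e1 : ∫ u, f u ∂ν1 = ∫ ω, (∫ v, al Φ (Y ω) v * f v ∂ρ) ∂Q := by
    rw [hν1,
      show (fun v => ENNReal.ofReal (D v)) = fun v => ((D v).toNNReal : ℝ≥0∞) from rfl,
      integral_withDensity_eq_integral_smul hDmeas.real_toNNReal]
    have hsm : ∀ v, (D v).toNNReal • f v = D v * f v := fun v => by
      rw [NNReal.smul_def, smul_eq_mul, Real.coe_toNNReal _ (hD0 v)]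
    rw [show (fun v => (D v).toNNReal • f v) = fun v => D v * f v from funext hsm]
    have h4 : ∀ v, D v * f v = ∫ ω, al Φ (Y ω) v * f v ∂Q := by
      intro v
      rw [hD]
      exact (integral_mul_const (f v) _).symm
    rw [integral_congr_ae (ae_of_all _ h4)]
    refine (integral_integral_swap ?_).symm
    refine intg ?_ c fun p => ?_
    · exact (halY2.mul (hf.comp measurable_snd)).aestronglyMeasurable
    · show |al Φ (Y p.1) p.2 * f p.2| ≤ c
      rw [abs_mul]
      calc |al Φ (Y p.1) p.2| * |f p.2| ≤ 1 * c :=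
            mul_le_mul (by rw [abs_of_nonneg (al_nonneg _ _ _)]; exact al_le_one _ _ _)
              (hb p.2) (abs_nonneg _) zero_le_one
        _ = c := one_mul c
  have e2 : ∫ u, f u ∂ν2 = ∫ ω, (1 - acc ρ Φ (Y ω)) * f (Y ω) ∂Q := by
    rw [hν2, integral_map hY.aemeasurable hf.aestronglyMeasurable,
      show (fun ω => ENNReal.ofReal (1 - acc ρ Φ (Y ω)))
        = fun ω => (((1 - acc ρ Φ (Y ω)).toNNReal : ℝ≥0∞)) from rfl,
      integral_withDensity_eq_integral_smul (show Measurable (fun ω => 1 - acc ρ Φ (Y ω)) from measurable_const.sub haccY).real_toNNReal]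
    refine integral_congr_ae (ae_of_all _ fun ω => ?_)
    show (1 - acc ρ Φ (Y ω)).toNNReal • f (Y ω) = (1 - acc ρ Φ (Y ω)) * f (Y ω)
    rw [NNReal.smul_def, smul_eq_mul,
      Real.coe_toNNReal _ (by linarith [acc_le_one (ρ := ρ) hΦm (Y ω)])]
  -- assemble
  have hif1 : Integrable f ν1 := intg hf.aestronglyMeasurable c hb
  have hif2 : Integrable f ν2 := intg hf.aestronglyMeasurable c hb
  rw [e0, hme, integral_add_measure hif1 hif2, e1, e2, ← integral_add]
  · rfl
  · refine intg ?_ c fun ω => ?_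
    · exact (((al_meas hΦm).mul (hf.comp measurable_snd)).stronglyMeasurable.integral_prod_right'.measurable.comp hY).aestronglyMeasurable
    · calc |∫ v, al Φ (Y ω) v * f v ∂ρ| ≤ acc ρ Φ (Y ω) * c := int_al_f_le hΦm hf hb _
        _ ≤ 1 * c := mul_le_mul_of_nonneg_right (acc_le_one hΦm _) hc
        _ = c := one_mul c
  · refine intg ((measurable_const.sub haccY).mul (hf.comp hY)).aestronglyMeasurable c
      fun ω => ?_
    rw [abs_mul]
    have h1 : |1 - acc ρ Φ (Y ω)| ≤ 1 := by
      rw [abs_of_nonneg (by linarith [acc_le_one (ρ := ρ) hΦm (Y ω)])]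
      linarith [acc_nonneg (ρ := ρ) (Φ := Φ) (Y ω)]
    calc |1 - acc ρ Φ (Y ω)| * |f (Y ω)| ≤ 1 * c :=
          mul_le_mul h1 (hb _) (abs_nonneg _) zero_le_one
      _ = c := one_mul c

end Stmt16Aux

/-- root-mean-square error bound `C (sup|g|) M^{-1/2}` for the
ergodic averages of the independence sampler started in the prior `ρ`, with a
constant `C` depending only on `Φ⋆`.  The Markov chain `(u^{(k)})` with
transition kernel `p = indepKernel ρ Φ` and initial distribution `ρ` is
encoded by a process `X` on a probability space `(Ω, P)` with initial law `ρ`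
satisfying the Markov property with respect to `p`; the canonical chain of the
Ionescu–Tulcea construction is such a process. -/
theorem stmt16
    {U : Type u} [MeasurableSpace U]
    (ρ : Measure U) [IsProbabilityMeasure ρ]
    (Φstar : ℝ) (hΦstar : 0 ≤ Φstar)
    (Φ : U → ℝ) (hΦmeas : Measurable Φ)
    (hΦ : ∀ u, 0 ≤ Φ u ∧ Φ u ≤ Φstar) :
    ∃ C > (0 : ℝ),
      ∀ (Ω : Type u) [MeasurableSpace Ω]
        (P : Measure Ω) [IsProbabilityMeasure P]
        (X : ℕ → Ω → U), (∀ k, Measurable (X k)) →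
        P.map (X 0) = ρ →
        (∀ (k : ℕ) (A : Set U), MeasurableSet A →
          ∀ B : Set Ω,
            MeasurableSet[⨆ i ∈ Finset.range (k + 1),
              MeasurableSpace.comap (X i) inferInstance] B →
            (P (B ∩ X (k + 1) ⁻¹' A)).toReal
              = ∫ ω in B, indepKernel ρ Φ (X k ω) A ∂P) →
        ∀ (g : U → ℝ), Measurable g →
        ∀ Bg : ℝ, (∀ u, |g u| ≤ Bg) →
        ∀ M : ℕ, 1 ≤ M →
          Real.sqrt (∫ ω,
              ((∫ u, g u ∂(posterior ρ Φ))
                - (1 / (M : ℝ)) * ∑ k ∈ Finset.Icc 1 M, g (X k ω)) ^ 2 ∂P)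
            ≤ C * Bg * (M : ℝ) ^ (-(1 / 2) : ℝ) := by
  classical
  have h0 : ∀ u, 0 ≤ Φ u := fun u => (hΦ u).1
  have hb1 : ∀ u, Φ u ≤ Φstar := fun u => (hΦ u).2
  have hU : Nonempty U := Stmt16Aux.nonemptyU (inferInstance : IsProbabilityMeasure ρ)
  set C : ℝ := Real.sqrt (8 * Real.exp Φstar) with hC
  have hCpos : 0 < C := Real.sqrt_pos.2 (by positivity)
  refine ⟨C, hCpos, ?_⟩
  intro Ω mΩ P hP X hXmeas hX0 hMarkov g hg Bg hBg M hM
  have hBg0 : 0 ≤ Bg := le_trans (abs_nonneg _) (hBg (Classical.arbitrary U))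
  haveI hπ : IsProbabilityMeasure (posterior ρ Φ) :=
    Stmt16Aux.posterior_isProb hΦmeas h0 hb1
  set Z : ℝ := Stmt16Aux.Znum ρ Φ with hZ
  have hZpos : 0 < Z := lt_of_lt_of_le (Real.exp_pos _) (Stmt16Aux.Znum_pos hΦmeas h0 hb1)
  have hZle1 : Z ≤ 1 := Stmt16Aux.Znum_le_one hΦmeas h0
  have hZlow : Real.exp (-Φstar) ≤ Z := Stmt16Aux.Znum_pos hΦmeas h0 hb1
  set r : ℝ := 1 - Z with hr
  have hr0 : 0 ≤ r := by rw [hr]; linarith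
  have hr1 : r < 1 := by rw [hr]; linarith
  set πg : ℝ := ∫ u, g u ∂(posterior ρ Φ) with hπg
  have hπgle : |πg| ≤ Bg := by
    refine le_trans (Stmt16Aux.abs_int_le _ _) ?_
    have h1 : ∫ u, |g u| ∂(posterior ρ Φ) ≤ ∫ _u, Bg ∂(posterior ρ Φ) :=
      integral_mono (Stmt16Aux.intg hg.abs.aestronglyMeasurable Bg
        (fun u => by rw [abs_abs]; exact hBg u)) (integrable_const Bg) hBg
    simpa using h1
  set gb : U → ℝ := fun u => g u - πg with hgb
  have hgbm : Measurable gb := hg.sub measurable_const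
  have hgbb : ∀ u, |gb u| ≤ 2 * Bg := by
    intro u
    have h1 : |g u + -πg| ≤ |g u| + |-πg| := abs_add_le _ _
    rw [abs_neg] at h1
    have : gb u = g u + -πg := by rw [hgb]; ring
    rw [this]
    linarith [hBg u]
  have hexpint : Integrable (fun v => Real.exp (-Φ v)) ρ :=
    Stmt16Aux.intg2 hΦmeas.neg.exp 1 (Stmt16Aux.exp_neg_abs_le h0)
  have hgint : Integrable (fun v => Real.exp (-Φ v) * g v) ρ := by
    refine Stmt16Aux.intg2 (hΦmeas.neg.exp.mul hg) Bg fun v => ?_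
    rw [abs_mul]
    calc |Real.exp (-Φ v)| * |g v| ≤ 1 * Bg :=
          mul_le_mul (Stmt16Aux.exp_neg_abs_le h0 v) (hBg v) (abs_nonneg _) zero_le_one
      _ = Bg := one_mul Bg
  have hmean : ∫ v, Real.exp (-Φ v) * gb v ∂ρ = 0 := by
    have hπg2 : πg = (∫ v, Real.exp (-Φ v) * g v ∂ρ) / Z := by
      rw [hπg, Stmt16Aux.integral_posterior hΦmeas hg,
        show (fun u => Real.exp (-Φ u) / Stmt16Aux.Znum ρ Φ * g u)
          = fun u => (Real.exp (-Φ u) * g u) / Z from funext fun u => by rw [← hZ]; ring]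
      exact integral_div Z _
    have hsub : ∫ v, Real.exp (-Φ v) * gb v ∂ρ
        = (∫ v, Real.exp (-Φ v) * g v ∂ρ) - (∫ v, Real.exp (-Φ v) ∂ρ) * πg := by
      rw [show (fun v => Real.exp (-Φ v) * gb v)
          = fun v => Real.exp (-Φ v) * g v - Real.exp (-Φ v) * πg from
          funext fun v => by rw [hgb]; ring,
        integral_sub hgint (hexpint.mul_const πg), integral_mul_const]
    rw [hsub, hπg2, show (∫ v, Real.exp (-Φ v) ∂ρ) = Z from rfl]
    field_simp
    ring
  -- properties of the iterates
  have hGmeas : ∀ n, Measurable ((Stmt16Aux.Pop ρ Φ)^[n] gb) := by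
    intro n
    induction n with
    | zero => exact hgbm
    | succ n ih =>
      rw [Function.iterate_succ_apply']
      exact Stmt16Aux.Pop_meas hΦmeas ih
  have hGprop : ∀ n, (∀ u, |(Stmt16Aux.Pop ρ Φ)^[n] gb u| ≤ r ^ n * (2 * Bg))
      ∧ (∫ v, Real.exp (-Φ v) * ((Stmt16Aux.Pop ρ Φ)^[n] gb) v ∂ρ = 0) := by
    intro n
    induction n with
    | zero =>
      refine ⟨fun u => ?_, hmean⟩
      rw [pow_zero, one_mul]
      exact hgbb u
    | succ n ih =>
      obtain ⟨hbnd, hmn⟩ := ih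
      constructor
      · intro u
        rw [Function.iterate_succ_apply']
        calc |Stmt16Aux.Pop ρ Φ ((Stmt16Aux.Pop ρ Φ)^[n] gb) u|
            ≤ (1 - Stmt16Aux.Znum ρ Φ) * (r ^ n * (2 * Bg)) :=
              Stmt16Aux.Pop_contract hΦmeas h0 (hGmeas n) hbnd hmn u
          _ = r ^ (n + 1) * (2 * Bg) := by rw [← hZ, ← hr, pow_succ]; ring
      · rw [Function.iterate_succ_apply',
          Stmt16Aux.Pop_invariant hΦmeas h0 (hGmeas n) hbnd]
        exact hmn
  -- one-step Markov property with a pulled-out factor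
  have hstep : ∀ (j k : ℕ), j ≤ k → ∀ (f : U → ℝ), Measurable f →
      ∀ c : ℝ, (∀ u, |f u| ≤ c) →
      ∫ ω, gb (X j ω) * f (X (k + 1) ω) ∂P
        = ∫ ω, gb (X j ω) * Stmt16Aux.Pop ρ Φ f (X k ω) ∂P := by
    intro j k hjk f hf c hb
    have hc : 0 ≤ c := le_trans (abs_nonneg _) (hb (Classical.arbitrary U))
    set m : MeasurableSpace Ω :=
      ⨆ i ∈ Finset.range (k + 1), MeasurableSpace.comap (X i) inferInstance with hm'
    have hm : m ≤ mΩ := by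
      rw [hm']
      exact iSup_le fun i => iSup_le fun _ => measurable_iff_comap_le.1 (hXmeas i)
    have hXm : ∀ i, i ∈ Finset.range (k + 1) → Measurable[m] (X i) := by
      intro i hi
      refine measurable_iff_comap_le.2 ?_
      rw [hm']
      exact le_iSup₂ (f := fun i (_ : i ∈ Finset.range (k + 1)) =>
        MeasurableSpace.comap (X i) inferInstance) i hi
    haveI : SigmaFinite (P.trim hm) := inferInstance
    have hφint : Integrable (fun ω => f (X (k + 1) ω)) P :=
      Stmt16Aux.intg (hf.comp (hXmeas (k + 1))).aestronglyMeasurable c fun ω => hb _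
    have hψm : StronglyMeasurable[m] (fun ω => Stmt16Aux.Pop ρ Φ f (X k ω)) :=
      ((Stmt16Aux.Pop_meas hΦmeas hf).comp
        (hXm k (Finset.self_mem_range_succ k))).stronglyMeasurable
    have heq : (fun ω => Stmt16Aux.Pop ρ Φ f (X k ω))
        =ᵐ[P] P[(fun ω => f (X (k + 1) ω))|m] := by
      refine ae_eq_condExp_of_forall_setIntegral_eq hm hφint (fun s hs _ => ?_)
        (fun s hs _ => ?_) (StronglyMeasurable.aestronglyMeasurable hψm)
      · exact Stmt16Aux.intg (μ := P.restrict s)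
          ((Stmt16Aux.Pop_meas hΦmeas hf).comp (hXmeas k)).aestronglyMeasurable c
          (fun ω => Stmt16Aux.Pop_bound hΦmeas hf hb (X k ω))
      · exact (Stmt16Aux.bridge hΦmeas h0 (hXmeas k) (hXmeas (k + 1)) (hm s hs)
          (fun A hA => hMarkov k A hA s (hm' ▸ hs)) hf hb).symm
    have hgbXm : StronglyMeasurable[m] (fun ω => gb (X j ω)) :=
      (hgbm.comp (hXm j (Finset.mem_range.2 (Nat.lt_succ_of_le hjk)))).stronglyMeasurable
    have hmul_int : Integrable ((fun ω => gb (X j ω)) * fun ω => f (X (k + 1) ω)) P := by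
      refine Stmt16Aux.intg ((hgbm.comp (hXmeas j)).mul
        (hf.comp (hXmeas (k + 1)))).aestronglyMeasurable ((2 * Bg) * c) fun ω => ?_
      show |gb (X j ω) * f (X (k + 1) ω)| ≤ (2 * Bg) * c
      rw [abs_mul]
      exact mul_le_mul (hgbb _) (hb _) (abs_nonneg _) (by linarith)
    calc ∫ ω, gb (X j ω) * f (X (k + 1) ω) ∂P
        = ∫ ω, ((fun ω => gb (X j ω)) * fun ω => f (X (k + 1) ω)) ω ∂P := rfl
      _ = ∫ ω, (P[(fun ω => gb (X j ω)) * fun ω => f (X (k + 1) ω)|m]) ω ∂P :=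
          (integral_condExp hm).symm
      _ = ∫ ω, ((fun ω => gb (X j ω)) * P[fun ω => f (X (k + 1) ω)|m]) ω ∂P :=
          integral_congr_ae (condExp_mul_of_stronglyMeasurable_left hgbXm hmul_int hφint)
      _ = ∫ ω, gb (X j ω) * Stmt16Aux.Pop ρ Φ f (X k ω) ∂P := by
          refine integral_congr_ae ?_
          filter_upwards [heq] with ω hω
          simp only [Pi.mul_apply]
          rw [← hω]
  -- iterated Markov property
  have hkey : ∀ (n j : ℕ) (f : U → ℝ), Measurable f → ∀ c : ℝ, (∀ u, |f u| ≤ c) →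
      ∫ ω, gb (X j ω) * f (X (j + n) ω) ∂P
        = ∫ ω, gb (X j ω) * ((Stmt16Aux.Pop ρ Φ)^[n] f) (X j ω) ∂P := by
    intro n
    induction n with
    | zero => intro j f hf c hb; rfl
    | succ n ih =>
      intro j f hf c hb
      rw [show j + (n + 1) = (j + n) + 1 from rfl,
        hstep j (j + n) (Nat.le_add_right j n) f hf c hb,
        ih j (Stmt16Aux.Pop ρ Φ f) (Stmt16Aux.Pop_meas hΦmeas hf) c
          (Stmt16Aux.Pop_bound hΦmeas hf hb),
        ← Function.iterate_succ_apply]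
  -- covariance bound
  have hprodint : ∀ j k : ℕ, Integrable (fun ω => gb (X j ω) * gb (X k ω)) P := by
    intro j k
    refine Stmt16Aux.intg ((hgbm.comp (hXmeas j)).mul
      (hgbm.comp (hXmeas k))).aestronglyMeasurable ((2 * Bg) * (2 * Bg)) fun ω => ?_
    rw [abs_mul]
    exact mul_le_mul (hgbb _) (hgbb _) (abs_nonneg _) (by linarith)
  have hcov : ∀ j k : ℕ,
      |∫ ω, gb (X j ω) * gb (X k ω) ∂P| ≤ r ^ (Nat.dist j k) * (4 * Bg ^ 2) := by
    have main : ∀ j d : ℕ,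
        |∫ ω, gb (X j ω) * gb (X (j + d) ω) ∂P| ≤ r ^ d * (4 * Bg ^ 2) := by
      intro j d
      rw [hkey d j gb hgbm (2 * Bg) hgbb]
      have hb2 : ∀ ω, |gb (X j ω) * ((Stmt16Aux.Pop ρ Φ)^[d] gb) (X j ω)|
          ≤ (2 * Bg) * (r ^ d * (2 * Bg)) := fun ω => by
        rw [abs_mul]
        exact mul_le_mul (hgbb _) ((hGprop d).1 _) (abs_nonneg _) (by linarith)
      have hint : Integrable (fun ω => gb (X j ω) * ((Stmt16Aux.Pop ρ Φ)^[d] gb) (X j ω)) P :=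
        Stmt16Aux.intg ((hgbm.comp (hXmeas j)).mul
          ((hGmeas d).comp (hXmeas j))).aestronglyMeasurable _ hb2
      calc |∫ ω, gb (X j ω) * ((Stmt16Aux.Pop ρ Φ)^[d] gb) (X j ω) ∂P|
          ≤ ∫ ω, |gb (X j ω) * ((Stmt16Aux.Pop ρ Φ)^[d] gb) (X j ω)| ∂P :=
            Stmt16Aux.abs_int_le _ _
        _ ≤ ∫ _ω, (2 * Bg) * (r ^ d * (2 * Bg)) ∂P :=
            integral_mono hint.abs (integrable_const _) hb2
        _ = (2 * Bg) * (r ^ d * (2 * Bg)) := by simp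
        _ = r ^ d * (4 * Bg ^ 2) := by ring
    intro j k
    rcases le_total j k with h | h
    · obtain ⟨d, rfl⟩ : ∃ d, k = j + d := ⟨k - j, by omega⟩
      rw [Nat.dist_eq_sub_of_le (Nat.le_add_right j d), Nat.add_sub_cancel_left]
      exact main j d
    · obtain ⟨d, rfl⟩ : ∃ d, j = k + d := ⟨j - k, by omega⟩
      rw [Nat.dist_eq_sub_of_le_right (Nat.le_add_right k d), Nat.add_sub_cancel_left,
        show (fun ω => gb (X (k + d) ω) * gb (X k ω))
          = fun ω => gb (X k ω) * gb (X (k + d) ω) from funext fun ω => mul_comm _ _]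
      exact main k d
  -- geometric sums
  have hgs : ∀ n : ℕ, ∑ i ∈ Finset.range n, r ^ i ≤ Z⁻¹ := by
    intro n
    have h1 : ∑' i : ℕ, r ^ i = (1 - r)⁻¹ := tsum_geometric_of_lt_one hr0 hr1
    have h2 := Summable.sum_le_tsum (Finset.range n) (fun i _ => pow_nonneg hr0 i)
      (summable_geometric_of_lt_one hr0 hr1)
    rw [h1] at h2
    have : (1 : ℝ) - r = Z := by rw [hr]; ring
    rwa [this] at h2
  have hinner : ∀ j ∈ Finset.Icc 1 M,
      (∑ k ∈ Finset.Icc 1 M, r ^ (Nat.dist j k)) ≤ 2 * Z⁻¹ := by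
    intro j hj
    obtain ⟨hj1, hjM⟩ := Finset.mem_Icc.1 hj
    have h1 : (∑ k ∈ Finset.Icc 1 M, r ^ (Nat.dist j k))
        ≤ ∑ k ∈ Finset.range (M + 1), r ^ (Nat.dist j k) :=
      Finset.sum_le_sum_of_subset_of_nonneg
        (fun k hk => Finset.mem_range.2 (Nat.lt_succ_of_le (Finset.mem_Icc.1 hk).2))
        (fun k _ _ => pow_nonneg hr0 _)
    have hsplit : ∑ k ∈ Finset.range (M + 1), r ^ (Nat.dist j k)
        = (∑ k ∈ Finset.range j, r ^ (Nat.dist j k))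
          + ∑ k ∈ Finset.Ico j (M + 1), r ^ (Nat.dist j k) := by
      rw [Finset.range_eq_Ico, Finset.range_eq_Ico]
      exact (Finset.sum_Ico_consecutive (fun k => r ^ (Nat.dist j k)) (Nat.zero_le j) (by omega : j ≤ M + 1)).symm
    have hA : ∑ k ∈ Finset.range j, r ^ (Nat.dist j k) ≤ Z⁻¹ := by
      have e1 : ∑ k ∈ Finset.range j, r ^ (Nat.dist j k)
          = ∑ i ∈ Finset.range j, r ^ (i + 1) := by
        rw [← Finset.sum_range_reflect]
        refine Finset.sum_congr rfl fun i hi => ?_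
        have hij : i < j := Finset.mem_range.1 hi
        congr 1
        rw [Nat.dist_eq_sub_of_le_right (by omega : j - 1 - i ≤ j)]
        omega
      rw [e1]
      calc ∑ i ∈ Finset.range j, r ^ (i + 1) ≤ ∑ i ∈ Finset.range j, r ^ i :=
            Finset.sum_le_sum fun i _ => pow_le_pow_of_le_one hr0 hr1.le (Nat.le_succ i)
        _ ≤ Z⁻¹ := hgs j
    have hB : ∑ k ∈ Finset.Ico j (M + 1), r ^ (Nat.dist j k) ≤ Z⁻¹ := by
      rw [Finset.sum_Ico_eq_sum_range]
      have e2 : ∀ i, Nat.dist j (j + i) = i := fun i => by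
        rw [Nat.dist_eq_sub_of_le (Nat.le_add_right _ _)]; omega
      calc ∑ i ∈ Finset.range (M + 1 - j), r ^ (Nat.dist j (j + i))
          = ∑ i ∈ Finset.range (M + 1 - j), r ^ i :=
            Finset.sum_congr rfl fun i _ => by rw [e2]
        _ ≤ Z⁻¹ := hgs _
    linarith
  -- the second moment of the sum
  have hSexp : ∫ ω, (∑ k ∈ Finset.Icc 1 M, gb (X k ω)) ^ 2 ∂P
      = ∑ j ∈ Finset.Icc 1 M, ∑ k ∈ Finset.Icc 1 M,
          ∫ ω, gb (X j ω) * gb (X k ω) ∂P := by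
    have h1 : ∀ ω, (∑ k ∈ Finset.Icc 1 M, gb (X k ω)) ^ 2
        = ∑ j ∈ Finset.Icc 1 M, ∑ k ∈ Finset.Icc 1 M, gb (X j ω) * gb (X k ω) :=
      fun ω => by rw [sq, Finset.sum_mul_sum]
    rw [integral_congr_ae (ae_of_all _ h1),
      integral_finset_sum _ (fun j _ => integrable_finset_sum _ fun k _ => hprodint j k)]
    exact Finset.sum_congr rfl fun j _ => integral_finset_sum _ fun k _ => hprodint j k
  have hSbound : ∫ ω, (∑ k ∈ Finset.Icc 1 M, gb (X k ω)) ^ 2 ∂P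
      ≤ (M : ℝ) * ((2 * Z⁻¹) * (4 * Bg ^ 2)) := by
    rw [hSexp]
    have hBg2 : (0:ℝ) ≤ 4 * Bg ^ 2 := by positivity
    calc ∑ j ∈ Finset.Icc 1 M, ∑ k ∈ Finset.Icc 1 M, ∫ ω, gb (X j ω) * gb (X k ω) ∂P
        ≤ ∑ j ∈ Finset.Icc 1 M, ∑ k ∈ Finset.Icc 1 M, r ^ (Nat.dist j k) * (4 * Bg ^ 2) :=
          Finset.sum_le_sum fun j _ => Finset.sum_le_sum fun k _ =>
            le_trans (le_abs_self _) (hcov j k)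
      _ = ∑ j ∈ Finset.Icc 1 M, (∑ k ∈ Finset.Icc 1 M, r ^ (Nat.dist j k)) * (4 * Bg ^ 2) := by
          refine Finset.sum_congr rfl fun j _ => ?_
          rw [Finset.sum_mul]
      _ ≤ ∑ _j ∈ Finset.Icc 1 M, (2 * Z⁻¹) * (4 * Bg ^ 2) :=
          Finset.sum_le_sum fun j hj =>
            mul_le_mul_of_nonneg_right (hinner j hj) hBg2
      _ = (M : ℝ) * ((2 * Z⁻¹) * (4 * Bg ^ 2)) := by
          rw [Finset.sum_const, Nat.card_Icc]
          simp [nsmul_eq_mul]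
  -- rewrite the error as a sum
  have hM0 : (M : ℝ) ≠ 0 := by
    have : (0:ℝ) < M := by exact_mod_cast lt_of_lt_of_le Nat.zero_lt_one hM
    linarith
  have hpt : ∀ ω, (πg - (1 / (M : ℝ)) * ∑ k ∈ Finset.Icc 1 M, g (X k ω)) ^ 2
      = (1 / (M : ℝ)) ^ 2 * (∑ k ∈ Finset.Icc 1 M, gb (X k ω)) ^ 2 := by
    intro ω
    have hs : ∑ k ∈ Finset.Icc 1 M, gb (X k ω)
        = (∑ k ∈ Finset.Icc 1 M, g (X k ω)) - (M : ℝ) * πg := by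
      have h1 : ∀ k ∈ Finset.Icc 1 M, gb (X k ω) = g (X k ω) - πg := fun k _ => rfl
      rw [Finset.sum_congr rfl h1, Finset.sum_sub_distrib, Finset.sum_const, Nat.card_Icc]
      simp [nsmul_eq_mul]
    have h2 : πg - (1 / (M : ℝ)) * ∑ k ∈ Finset.Icc 1 M, g (X k ω)
        = -(1 / (M : ℝ)) * ((∑ k ∈ Finset.Icc 1 M, g (X k ω)) - (M : ℝ) * πg) := by
      field_simp
      ring
    rw [h2, hs]
    ring
  have hI : ∫ ω, (πg - (1 / (M : ℝ)) * ∑ k ∈ Finset.Icc 1 M, g (X k ω)) ^ 2 ∂P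
      = (1 / (M : ℝ)) ^ 2 * ∫ ω, (∑ k ∈ Finset.Icc 1 M, gb (X k ω)) ^ 2 ∂P := by
    rw [integral_congr_ae (ae_of_all _ hpt), integral_const_mul]
  have hZinv : Z⁻¹ ≤ Real.exp Φstar := by
    have h1 : Z⁻¹ ≤ (Real.exp (-Φstar))⁻¹ := inv_anti₀ (Real.exp_pos _) hZlow
    rwa [Real.exp_neg, inv_inv] at h1
  have hC2 : C ^ 2 = 8 * Real.exp Φstar := Real.sq_sqrt (by positivity)
  have hIle : ∫ ω, (πg - (1 / (M : ℝ)) * ∑ k ∈ Finset.Icc 1 M, g (X k ω)) ^ 2 ∂P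
      ≤ C ^ 2 * Bg ^ 2 * (M : ℝ)⁻¹ := by
    rw [hI, hC2]
    have hpos : (0:ℝ) ≤ Bg ^ 2 * (M : ℝ)⁻¹ := by positivity
    calc (1 / (M : ℝ)) ^ 2 * ∫ ω, (∑ k ∈ Finset.Icc 1 M, gb (X k ω)) ^ 2 ∂P
        ≤ (1 / (M : ℝ)) ^ 2 * ((M : ℝ) * ((2 * Z⁻¹) * (4 * Bg ^ 2))) :=
          mul_le_mul_of_nonneg_left hSbound (by positivity)
      _ = (8 * Z⁻¹) * Bg ^ 2 * (M : ℝ)⁻¹ := by field_simp; ring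
      _ ≤ 8 * Real.exp Φstar * Bg ^ 2 * (M : ℝ)⁻¹ := by
          nlinarith [mul_le_mul_of_nonneg_right hZinv hpos]
  refine le_trans (Real.sqrt_le_sqrt hIle) (le_of_eq ?_)
  rw [show C ^ 2 * Bg ^ 2 * (M : ℝ)⁻¹ = (C * Bg) ^ 2 * (M : ℝ)⁻¹ by ring,
    Real.sqrt_mul (by positivity) ((M : ℝ)⁻¹), Real.sqrt_sq (by positivity),
    Real.sqrt_inv, Real.rpow_neg (Nat.cast_nonneg M), ← Real.sqrt_eq_rpow]
end

section
/- Let ι be a countable index set, let 0 < p < 1, and let b : ι → [0,∞) with ∑_{ν∈ι} b_ν^p < ∞, and set σ = 1/p − 1/2. Then there exists a nondecreasing sequence (Λ_N)_{N∈ℕ} of finite subsets of ι with card(Λ_N) ≤ N such that for all N ∈ ℕ, ∑_{ν ∈ ι \setminus Λ_N} b_ν² ≤ C N^{−2σ}, where C = ( ∑_{ν∈ι} b_ν^p )^{2/p} is independent of N. -/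
open scoped BigOperators

/-- Stechkin's lemma / best `N`-term approximation: if
`(b_ν)_{ν ∈ ι}` is nonnegative and `p`-summable with `0 < p < 1`, then there
is a nondecreasing sequence of finite sets `Λ_N ⊆ ι` with `card Λ_N ≤ N` such
that the tail of the squared series is bounded by `C N^{-2σ}` with
`σ = 1/p - 1/2` and `C = (∑ b_ν^p)^{2/p}`. -/
theorem stmt18
    {ι : Type*} [Countable ι]
    (p : ℝ) (hp0 : 0 < p) (hp1 : p < 1)
    (b : ι → ℝ) (hb : ∀ ν, 0 ≤ b ν)
    (hsum : Summable fun ν => b ν ^ p) :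
    ∃ Λ : ℕ → Finset ι, Monotone Λ ∧ (∀ N, (Λ N).card ≤ N) ∧
      ∀ N : ℕ, 1 ≤ N →
        (∑' ν : {ν : ι // ν ∉ Λ N}, b (ν : ι) ^ 2)
          ≤ (∑' ν, b ν ^ p) ^ (2 / p) *
              (N : ℝ) ^ (-(2 * (1 / p - 1 / 2))) := by
  set S : ℝ := ∑' ν, b ν ^ p with hS
  have hSnn : 0 ≤ S := tsum_nonneg fun ν => Real.rpow_nonneg (hb ν) p
  have hterm_le : ∀ ν, b ν ^ p ≤ S := fun ν =>
    Summable.le_tsum hsum ν fun ν' _ => Real.rpow_nonneg (hb ν') p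
  rcases eq_or_lt_of_le hSnn with hS0 | hSpos
  · -- S = 0 : all b ν = 0
    have hbz : ∀ ν, b ν = 0 := by
      intro ν
      have h1 : b ν ^ p ≤ 0 := hS0 ▸ hterm_le ν
      have h2 : b ν ^ p = 0 := le_antisymm h1 (Real.rpow_nonneg (hb ν) p)
      rcases Real.rpow_eq_zero_iff_of_nonneg (hb ν) |>.mp h2 with ⟨h, _⟩
      exact h
    refine ⟨fun _ => ∅, monotone_const, fun N => by simp, fun N hN => ?_⟩
    have : (∑' ν : {ν : ι // ν ∉ (∅ : Finset ι)}, b (ν : ι) ^ 2) = 0 := by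
      simp [hbz]
    rw [this, ← hS0]
    have : (0:ℝ) ^ (2 / p) = 0 := by
      rw [Real.zero_rpow (by positivity)]
    rw [this, zero_mul]
  · -- S > 0
    have hq : (0:ℝ) < 2 / p - 1 := by
      have : (1:ℝ) < 2 / p := by
        rw [lt_div_iff₀ hp0]; linarith
      linarith
    -- finiteness of threshold sets
    have hfin : ∀ N : ℕ, {ν : ι | S / (N + 1) < b ν ^ p}.Finite := by
      intro N
      have hpos : (0:ℝ) < S / (N + 1) := by positivity
      have := hsum.tendsto_cofinite_zero.eventually (gt_mem_nhds hpos)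
      rw [Filter.eventually_cofinite] at this
      exact this.subset fun ν hν => by simpa using not_lt.mpr (le_of_lt hν)
    refine ⟨fun N => (hfin N).toFinset, ?_, ?_, ?_⟩
    · intro N M hNM
      simp only [Finset.le_iff_subset, Set.Finite.toFinset_subset_toFinset]
      intro ν hν
      have hle : S / (M + 1) ≤ S / (N + 1) := by
        apply div_le_div_of_nonneg_left hSnn (by positivity)
        exact_mod_cast Nat.add_le_add_right hNM 1
      exact lt_of_le_of_lt hle hν
    · intro N
      show ((hfin N).toFinset).card ≤ N
      set Λ := (hfin N).toFinset with hΛ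
      rcases Λ.eq_empty_or_nonempty with h | h
      · simp [h]
      · have hlt : (Λ.card : ℝ) * (S / (N + 1)) < ∑ ν ∈ Λ, b ν ^ p := by
          have := Finset.sum_lt_sum_of_nonempty h
            (f := fun _ => S / (N + 1)) (g := fun ν => b ν ^ p) ?_
          · simpa [mul_comm] using this
          · intro ν hν
            have : ν ∈ {ν : ι | S / (N + 1) < b ν ^ p} := by
              simpa [Λ, Set.Finite.mem_toFinset] using hν
            exact this
        have hsum_le : ∑ ν ∈ Λ, b ν ^ p ≤ S :=
          Summable.sum_le_tsum Λ (fun ν _ => Real.rpow_nonneg (hb ν) p) hsum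
        have h2 : (Λ.card : ℝ) * (S / (N + 1)) < S := lt_of_lt_of_le hlt hsum_le
        have h3 : (Λ.card : ℝ) < N + 1 := by
          have hN1 : (0:ℝ) < (N:ℝ) + 1 := by positivity
          rw [← mul_div_assoc, div_lt_iff₀ hN1, mul_comm S] at h2
          exact lt_of_mul_lt_mul_right h2 hSnn
        have h4 : Λ.card < N + 1 := by exact_mod_cast h3
        exact Nat.lt_succ_iff.mp h4
    · intro N hN
      set t : ℝ := S / (N + 1) with ht
      have htnn : 0 ≤ t := by positivity
      have hkey : ∀ ν : {ν : ι // ν ∉ (hfin N).toFinset},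
          b (ν : ι) ^ 2 ≤ t ^ (2 / p - 1) * b (ν : ι) ^ p := by
        rintro ⟨ν, hν⟩
        have hxt : b ν ^ p ≤ t := by
          simp only [Set.Finite.mem_toFinset, Set.mem_setOf_eq, not_lt] at hν
          exact hν
        rcases eq_or_lt_of_le (hb ν) with hx0 | hxpos
        · rw [← hx0]
          simp [Real.zero_rpow hp0.ne']
        · have hxp : 0 < b ν ^ p := Real.rpow_pos_of_pos hxpos p
          have e1 : b ν ^ 2 = (b ν ^ p) ^ (2 / p) := by
            rw [← Real.rpow_natCast (b ν) 2, ← Real.rpow_mul (hb ν)]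
            congr 1
            field_simp
            norm_num
          rw [e1]
          have e2 : (b ν ^ p) ^ (2 / p) = (b ν ^ p) ^ (2 / p - 1) * b ν ^ p := by
            rw [← Real.rpow_add_one hxp.ne' (2 / p - 1)]
            ring_nf
          rw [e2]
          exact mul_le_mul_of_nonneg_right
            (Real.rpow_le_rpow hxp.le hxt hq.le) hxp.le
      have hsub : Summable fun ν : {ν : ι // ν ∉ (hfin N).toFinset} => b (ν : ι) ^ p :=
        hsum.subtype _
      have hsub2 : Summable fun ν : {ν : ι // ν ∉ (hfin N).toFinset} => b (ν : ι) ^ 2 := by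
        apply Summable.of_nonneg_of_le (fun ν => by positivity) hkey
        exact hsub.mul_left _
      calc (∑' ν : {ν : ι // ν ∉ (hfin N).toFinset}, b (ν : ι) ^ 2)
          ≤ ∑' ν : {ν : ι // ν ∉ (hfin N).toFinset}, t ^ (2 / p - 1) * b (ν : ι) ^ p :=
            Summable.tsum_le_tsum hkey hsub2 (hsub.mul_left _)
        _ = t ^ (2 / p - 1) * ∑' ν : {ν : ι // ν ∉ (hfin N).toFinset}, b (ν : ι) ^ p := by
            rw [tsum_mul_left]
        _ ≤ t ^ (2 / p - 1) * S := by
            apply mul_le_mul_of_nonneg_left _ (Real.rpow_nonneg htnn _)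
            exact Summable.tsum_subtype_le (fun ν => b ν ^ p) _ (fun ν => Real.rpow_nonneg (hb ν) p) hsum
        _ ≤ (S / N) ^ (2 / p - 1) * S := by
            apply mul_le_mul_of_nonneg_right _ hSnn
            apply Real.rpow_le_rpow htnn _ hq.le
            apply div_le_div_of_nonneg_left hSnn
            · exact_mod_cast hN
            · exact_mod_cast Nat.le_succ N
        _ = S ^ (2 / p) * (N : ℝ) ^ (-(2 * (1 / p - 1 / 2))) := by
            have hNpos : (0:ℝ) < N := by exact_mod_cast hN
            rw [show -(2 * (1 / p - 1 / 2)) = -(2 / p - 1) from by ring,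
              Real.div_rpow hSnn hNpos.le, Real.rpow_neg hNpos.le,
              div_mul_eq_mul_div,
              ← Real.rpow_add_one hSpos.ne',
              show (2 / p - 1 + 1 : ℝ) = 2 / p from by ring,
              div_eq_mul_inv]
end
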